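/- arXiv:1604.05540 — 5 statements merged into one kernel-verified Lean document; each statement's English description precedes it below -/
import Mathlib

section
/- Assume the Feller index satisfies ν = 2κλ/θ² > 1/2 and that ρ < 0. Let f : ℝ → ℝ be measurable with sup_{x∈ℝ} |f(x)·exp(−x)| < ∞. Then there exist ε > 0, δ > 0 and C < ∞ (depending only on κ, λ, θ, ρ, μ, T, x₀, v₀ and f) such that for every partition 0 = t₀ < t₁ < ⋯ < t_N = T of [0,T] with mesh Δ < δ one has E|f(x_N)|^{1+ε} ≤ C. -/
open MeasureTheory ProbabilityTheory
open scoped ENNReal NNReal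

noncomputable section

variable {Ω : Type*} [MeasurableSpace Ω]

/-- A standard Brownian motion (indexed by all of `ℝ`; only nonnegative times matter):
it starts at `0`, has Gaussian increments with the correct variance, and has independent
increments. -/
structure IsBrownian (P : Measure Ω) (W : ℝ → Ω → ℝ) : Prop where
  meas : ∀ s : ℝ, Measurable (W s)
  start : ∀ ω, W 0 ω = 0
  gauss : ∀ s t : ℝ, 0 ≤ s → s ≤ t →
    Measure.map (fun ω => W t ω - W s ω) P = gaussianReal 0 (Real.toNNReal (t - s))
  indep : ∀ u : ℕ → ℝ, Monotone u →
    iIndepFun (fun k ω => W (u (k + 1)) ω - W (u k) ω) P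

/-- A partition `0 = t₀ < t₁ < ⋯ < t_N = T` of `[0, T]`. -/
structure IsPartition (t : ℕ → ℝ) (N : ℕ) (T : ℝ) : Prop where
  zero : t 0 = 0
  last : t N = T
  lt : ∀ k < N, t k < t (k + 1)

/-- The mesh `Δ = max_{1 ≤ k ≤ N} (t_k - t_{k-1})` of a partition. -/
def mesh (t : ℕ → ℝ) (N : ℕ) : ℝ := ⨆ k ∈ Finset.range N, (t (k + 1) - t k)

/-- The drift-implicit Milstein scheme `v_n` for the CIR process (closed form). -/
def milstein (κ lam θ v₀ : ℝ) (t : ℕ → ℝ) (W : ℝ → Ω → ℝ) : ℕ → Ω → ℝ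
  | 0 => fun _ => v₀
  | n + 1 => fun ω =>
      (1 / (1 + κ * (t (n + 1) - t n))) *
        ((Real.sqrt (milstein κ lam θ v₀ t W n ω)
            + (θ / 2) * (W (t (n + 1)) ω - W (t n) ω)) ^ 2
          + (κ * lam - θ ^ 2 / 4) * (t (n + 1) - t n))

/-- `n(s)`: the index of the largest partition point `≤ s`. -/
def nIdx (t : ℕ → ℝ) (N : ℕ) (s : ℝ) : ℕ := Nat.findGreatest (fun n => t n ≤ s) N

/-- `η(s)`: the largest partition point `≤ s`. -/
def eta (t : ℕ → ℝ) (N : ℕ) (s : ℝ) : ℝ := t (nIdx t N s)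

/-- `ṽ_s`: the interpolation of the Milstein scheme before the implicit-drift division. -/
def tildeV (κ lam θ v₀ : ℝ) (t : ℕ → ℝ) (N : ℕ) (W : ℝ → Ω → ℝ) (s : ℝ) (ω : Ω) : ℝ :=
  milstein κ lam θ v₀ t W (nIdx t N s) ω + κ * lam * (s - eta t N s)
    + θ * Real.sqrt (milstein κ lam θ v₀ t W (nIdx t N s) ω) * (W s ω - W (eta t N s) ω)
    + (θ ^ 2 / 4) * ((W s ω - W (eta t N s) ω) ^ 2 - (s - eta t N s))

/-- `v̂_s`: the continuous-time interpolation of the Milstein scheme. -/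
def hatV (κ lam θ v₀ : ℝ) (t : ℕ → ℝ) (N : ℕ) (W : ℝ → Ω → ℝ) (s : ℝ) (ω : Ω) : ℝ :=
  tildeV κ lam θ v₀ t N W s ω / (1 + κ * (s - eta t N s))

/-- Euler scheme `x_n` for the log-price in the (log-)Heston model. -/
def eulerX (κ lam θ v₀ x₀ μ ρ : ℝ) (t : ℕ → ℝ) (W B : ℝ → Ω → ℝ) : ℕ → Ω → ℝ
  | 0 => fun _ => x₀
  | n + 1 => fun ω =>
      eulerX κ lam θ v₀ x₀ μ ρ t W B n ω
        + (μ - (1 / 2) * milstein κ lam θ v₀ t W n ω) * (t (n + 1) - t n)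
        + Real.sqrt (milstein κ lam θ v₀ t W n ω) *
            (ρ * (W (t (n + 1)) ω - W (t n) ω)
              + Real.sqrt (1 - ρ ^ 2) * (B (t (n + 1)) ω - B (t n) ω))

open Real

lemma gauss_pdf_mul_exp (c : ℝ) {v : ℝ≥0} (hv : v ≠ 0) (x : ℝ) :
    gaussianPDFReal 0 v x * Real.exp (c * x)
      = Real.exp (c ^ 2 * v / 2) * gaussianPDFReal (c * v) v x := by
  have hv' : (0:ℝ) < v := by positivity
  have h1 : gaussianPDFReal 0 v x * Real.exp (c * x)
      = (√(2 * π * v))⁻¹ * Real.exp (-(x - 0) ^ 2 / (2 * v) + c * x) := by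
    rw [gaussianPDFReal, mul_assoc, ← Real.exp_add]
  have h2 : Real.exp (c ^ 2 * v / 2) * gaussianPDFReal (c * v) v x
      = (√(2 * π * v))⁻¹ * Real.exp (c ^ 2 * v / 2 + -(x - c * v) ^ 2 / (2 * v)) := by
    rw [gaussianPDFReal, mul_left_comm, ← Real.exp_add]
  rw [h1, h2]
  congr 1
  have : (v:ℝ) ≠ 0 := ne_of_gt hv'
  field_simp
  ring

lemma gauss_mgf (c : ℝ) (v : ℝ≥0) :
    ∫⁻ x, ENNReal.ofReal (Real.exp (c * x)) ∂(gaussianReal 0 v)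
      = ENNReal.ofReal (Real.exp (c ^ 2 * v / 2)) := by
  by_cases hv : v = 0
  · subst hv
    rw [gaussianReal_zero_var, lintegral_dirac]
    simp
  · have hg : Measurable (fun x : ℝ => ENNReal.ofReal (Real.exp (c * x))) :=
      (measurable_id.const_mul c).exp.ennreal_ofReal
    rw [gaussianReal_of_var_ne_zero _ hv,
      lintegral_withDensity_eq_lintegral_mul _ (measurable_gaussianPDF _ _) hg]
    have hpt : ∀ x : ℝ, (gaussianPDF 0 v * fun x => ENNReal.ofReal (Real.exp (c * x))) x
        = ENNReal.ofReal (Real.exp (c ^ 2 * v / 2)) * ENNReal.ofReal (gaussianPDFReal (c * v) v x) := by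
      intro x
      simp only [Pi.mul_apply, gaussianPDF]
      rw [← ENNReal.ofReal_mul (gaussianPDFReal_nonneg _ _ _),
        ← ENNReal.ofReal_mul (Real.exp_nonneg _), gauss_pdf_mul_exp c hv x]
    simp only [hpt]
    rw [lintegral_const_mul' _ _ ENNReal.ofReal_ne_top,
      lintegral_gaussianPDFReal_eq_one (c * v) hv, mul_one]

lemma sqrt_inv_le_exp {u : ℝ} (h0 : 0 ≤ u) (h2 : u ≤ 1/2) :
    Real.sqrt (1 / (1 - u)) ≤ Real.exp u := by
  have h1 : (0:ℝ) < 1 - u := by linarith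
  have he : Real.exp u = Real.sqrt ((Real.exp u) ^ 2) :=
    (Real.sqrt_sq (Real.exp_nonneg u)).symm
  rw [he]
  apply Real.sqrt_le_sqrt
  rw [sq, ← Real.exp_add]
  rw [div_le_iff₀ h1]
  nlinarith [Real.add_one_le_exp (u + u), mul_nonneg h0 (by linarith : (0:ℝ) ≤ 1 - 2*u),
    mul_le_mul_of_nonneg_right (Real.add_one_le_exp (u + u)) h1.le]

lemma gauss_sq_mgf_le {c : ℝ} (hc : 0 ≤ c) {v : ℝ≥0} (hcv : 2 * c * v ≤ 1/2) :
    ∫⁻ x, ENNReal.ofReal (Real.exp (c * x ^ 2)) ∂(gaussianReal 0 v)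
      ≤ ENNReal.ofReal (Real.exp (2 * c * v)) := by
  by_cases hv : v = 0
  · subst hv
    rw [gaussianReal_zero_var, lintegral_dirac]
    simp [Real.exp_nonneg, ENNReal.ofReal_le_ofReal, Real.exp_le_exp]
  · have hv' : (0:ℝ) < v := by positivity
    have hg : Measurable (fun x : ℝ => ENNReal.ofReal (Real.exp (c * x ^ 2))) :=
      ((measurable_id.pow_const 2).const_mul c).exp.ennreal_ofReal
    set b : ℝ := 1 / (2 * v) - c with hb
    have hbpos : 0 < b := by
      rw [hb]
      have : c < 1 / (2 * v) := by
        rw [lt_div_iff₀ (by positivity)]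
        nlinarith
      linarith
    have hpt : ∀ x : ℝ, (gaussianPDF 0 v * fun x => ENNReal.ofReal (Real.exp (c * x ^ 2))) x
        = ENNReal.ofReal ((√(2 * π * v))⁻¹) * ENNReal.ofReal (Real.exp (-b * x ^ 2)) := by
      intro x
      simp only [Pi.mul_apply, gaussianPDF]
      rw [← ENNReal.ofReal_mul (gaussianPDFReal_nonneg _ _ _), ← ENNReal.ofReal_mul (by positivity)]
      congr 1
      rw [gaussianPDFReal, mul_assoc, ← Real.exp_add]
      congr 1
      have hvne : (v:ℝ) ≠ 0 := ne_of_gt hv'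
      rw [hb]
      field_simp
      ring
    rw [gaussianReal_of_var_ne_zero _ hv,
      lintegral_withDensity_eq_lintegral_mul _ (measurable_gaussianPDF _ _) hg]
    simp only [hpt]
    rw [lintegral_const_mul' _ _ ENNReal.ofReal_ne_top,
      ← ofReal_integral_eq_lintegral_ofReal (integrable_exp_neg_mul_sq hbpos)
        (Filter.Eventually.of_forall fun x => Real.exp_nonneg _),
      integral_gaussian b, ← ENNReal.ofReal_mul (by positivity)]
    apply ENNReal.ofReal_le_ofReal
    -- real inequality: (√(2πv))⁻¹ * √(π/b) ≤ exp (2cv)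
    have hπ : (0:ℝ) < π := Real.pi_pos
    have key : (√(2 * π * v))⁻¹ * √(π / b) = Real.sqrt (1 / (1 - 2 * c * v)) := by
      rw [← Real.sqrt_inv, ← Real.sqrt_mul (by positivity)]
      have h2vb : (2 * (v:ℝ)) * b = 1 - 2 * c * v := by
        rw [hb]; field_simp
      rw [← h2vb]
      congr 1
      field_simp
    rw [key]
    exact sqrt_inv_le_exp (by positivity) hcv

lemma iIndepFun_map_of_comp {Ω Ω' : Type*} [MeasurableSpace Ω] [MeasurableSpace Ω']
    {P : Measure Ω} {φ : Ω → Ω'} (hφ : Measurable φ) {g : ℕ → Ω' → ℝ}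
    (hg : ∀ k, Measurable (g k))
    (h : iIndepFun (fun k ω => g k (φ ω)) P) :
    iIndepFun g (P.map φ) := by
  rw [iIndepFun_iff_measure_inter_preimage_eq_mul] at h ⊢
  intro S sets hsets
  have hmeas : MeasurableSet (⋂ i ∈ S, g i ⁻¹' sets i) :=
    MeasurableSet.biInter S.countable_toSet (fun i hi => (hg i) (hsets i hi))
  rw [Measure.map_apply hφ hmeas]
  have hpre : φ ⁻¹' (⋂ i ∈ S, g i ⁻¹' sets i) = ⋂ i ∈ S, (fun ω => g i (φ ω)) ⁻¹' sets i := by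
    simp only [Set.preimage_iInter]
    rfl
  rw [hpre, h S hsets]
  exact Finset.prod_congr rfl fun i hi =>
    (Measure.map_apply hφ ((hg i) (hsets i hi))).symm

lemma lintegral_prod_range_of_iIndepFun {Ω' : Type*} [MeasurableSpace Ω'] {μ : Measure Ω'}
    [IsProbabilityMeasure μ] {X : ℕ → Ω' → ℝ≥0∞} (hX : ∀ k, Measurable (X k))
    (hindep : iIndepFun X μ) (N : ℕ) :
    ∫⁻ ω, ∏ k ∈ Finset.range N, X k ω ∂μ = ∏ k ∈ Finset.range N, ∫⁻ ω, X k ω ∂μ := by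
  induction N with
  | zero => simp
  | succ n ih =>
    have hind : IndepFun (∏ j ∈ Finset.range n, X j) (X n) μ :=
      hindep.indepFun_prod_range_succ hX n
    have hmp : Measurable (∏ j ∈ Finset.range n, X j) := by
      have := Finset.measurable_prod (Finset.range n) (fun i (_ : i ∈ Finset.range n) => hX i)
      convert this using 1
      funext ω; simp
    simp only [Finset.prod_range_succ]
    have : (fun ω => (∏ k ∈ Finset.range n, X k ω) * X n ω)
        = fun ω => ((∏ j ∈ Finset.range n, X j) * X n) ω := by
      funext ω; simp
    calc ∫⁻ ω, (∏ k ∈ Finset.range n, X k ω) * X n ω ∂μ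
        = ∫⁻ ω, ((∏ j ∈ Finset.range n, X j) * X n) ω ∂μ := by rw [this]
      _ = (∫⁻ ω, (∏ j ∈ Finset.range n, X j) ω ∂μ) * ∫⁻ ω, X n ω ∂μ :=
          lintegral_mul_eq_lintegral_mul_lintegral_of_indepFun hmp (hX n) hind
      _ = (∏ k ∈ Finset.range n, ∫⁻ ω, X k ω ∂μ) * ∫⁻ ω, X n ω ∂μ := by
          rw [← ih]
          congr 1
          apply lintegral_congr
          intro ω; simp

lemma aux_prod_ofReal_exp {ι : Type*} (s : Finset ι) (f : ι → ℝ) :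
    ∏ i ∈ s, ENNReal.ofReal (Real.exp (f i)) = ENNReal.ofReal (Real.exp (∑ i ∈ s, f i)) := by
  classical
  induction s using Finset.cons_induction with
  | empty => simp
  | cons a s ha ih =>
    rw [Finset.prod_cons, Finset.sum_cons, ih, Real.exp_add,
      ENNReal.ofReal_mul (Real.exp_nonneg _)]

set_option linter.unusedSectionVars false

section Scheme
variable {Ω : Type*} [MeasurableSpace Ω]

lemma milstein_nonneg {κ lam θ v₀ : ℝ} (hκ : 0 ≤ κ) (hfour : 0 ≤ κ * lam - θ ^ 2 / 4)
    (hv₀ : 0 ≤ v₀) {t : ℕ → ℝ} {N : ℕ} (ht : ∀ k < N, t k < t (k + 1))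
    (W : ℝ → Ω → ℝ) (ω : Ω) : ∀ n, n ≤ N → 0 ≤ milstein κ lam θ v₀ t W n ω := by
  intro n
  induction n with
  | zero => intro _; exact hv₀
  | succ n _ =>
    intro hn
    have hΔ : 0 < t (n + 1) - t n := sub_pos.2 (ht n (Nat.lt_of_succ_le hn))
    show 0 ≤ (1 / (1 + κ * (t (n + 1) - t n))) * _
    have h1 : (0:ℝ) < 1 + κ * (t (n + 1) - t n) := by nlinarith
    apply mul_nonneg (by positivity)
    have := sq_nonneg (Real.sqrt (milstein κ lam θ v₀ t W n ω)
      + (θ / 2) * (W (t (n + 1)) ω - W (t n) ω))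
    nlinarith

lemma milstein_identity {κ lam θ v₀ : ℝ} (hκ : 0 ≤ κ) {t : ℕ → ℝ} {n : ℕ}
    (hΔ : 0 < t (n + 1) - t n) {W : ℝ → Ω → ℝ} {ω : Ω}
    (hv : 0 ≤ milstein κ lam θ v₀ t W n ω) :
    θ * Real.sqrt (milstein κ lam θ v₀ t W n ω) * (W (t (n + 1)) ω - W (t n) ω)
      = (1 + κ * (t (n + 1) - t n)) * milstein κ lam θ v₀ t W (n + 1) ω
        - milstein κ lam θ v₀ t W n ω
        - (θ ^ 2 / 4) * (W (t (n + 1)) ω - W (t n) ω) ^ 2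
        - (κ * lam - θ ^ 2 / 4) * (t (n + 1) - t n) := by
  have h1 : (0:ℝ) < 1 + κ * (t (n + 1) - t n) := by nlinarith
  have hs : Real.sqrt (milstein κ lam θ v₀ t W n ω) ^ 2 = milstein κ lam θ v₀ t W n ω :=
    Real.sq_sqrt hv
  have hmul : (1 + κ * (t (n + 1) - t n)) * milstein κ lam θ v₀ t W (n + 1) ω
      = (Real.sqrt (milstein κ lam θ v₀ t W n ω)
            + (θ / 2) * (W (t (n + 1)) ω - W (t n) ω)) ^ 2
          + (κ * lam - θ ^ 2 / 4) * (t (n + 1) - t n) := by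
    show (1 + κ * (t (n + 1) - t n)) * ((1 / (1 + κ * (t (n + 1) - t n))) * _) = _
    field_simp
  rw [hmul]
  nlinarith [hs]

lemma eulerX_sum {κ lam θ v₀ x₀ μ ρ : ℝ} {t : ℕ → ℝ} {W B : ℝ → Ω → ℝ} (N : ℕ) (ω : Ω) :
    eulerX κ lam θ v₀ x₀ μ ρ t W B N ω
      = x₀ + ∑ n ∈ Finset.range N,
          ((μ - (1 / 2) * milstein κ lam θ v₀ t W n ω) * (t (n + 1) - t n)
            + Real.sqrt (milstein κ lam θ v₀ t W n ω) *
                (ρ * (W (t (n + 1)) ω - W (t n) ω)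
                  + Real.sqrt (1 - ρ ^ 2) * (B (t (n + 1)) ω - B (t n) ω))) := by
  induction N with
  | zero => simp [eulerX]
  | succ n ih => rw [Finset.sum_range_succ, ← add_assoc, ← ih]; show _ + _ + _ = _; ring

end Scheme

section PW
variable {Ω : Type*} [MeasurableSpace Ω]

lemma partition_le {t : ℕ → ℝ} {N : ℕ} (ht : ∀ k < N, t k < t (k + 1)) :
    ∀ {j}, j ≤ N → ∀ {i}, i ≤ j → t i ≤ t j := by
  intro j
  induction j with
  | zero => intro _ i hi; simp [Nat.le_zero.mp hi]
  | succ j ih =>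
    intro hj i hi
    rcases Nat.eq_or_lt_of_le hi with h | h
    · rw [h]
    · exact le_trans (ih (le_trans (Nat.le_succ j) hj) (Nat.lt_succ_iff.mp h))
        (le_of_lt (ht j (Nat.lt_of_succ_le hj)))

lemma euler_pointwise {κ lam θ v₀ x₀ μ ρ T : ℝ} {t : ℕ → ℝ} {N : ℕ}
    (hκ : 0 ≤ κ) (hθ : 0 < θ) (hρ : ρ < 0) (hfour : 0 ≤ κ * lam - θ ^ 2 / 4)
    (hv₀ : 0 ≤ v₀) (hT : 0 ≤ T) (hpart : IsPartition t N T) (W B : ℝ → Ω → ℝ) (ω : Ω) :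
    eulerX κ lam θ v₀ x₀ μ ρ t W B N ω
      ≤ x₀ + |μ| * T + (-ρ / θ) * (v₀ + (κ * lam - θ ^ 2 / 4) * T)
        + (-ρ * θ / 4) * (∑ n ∈ Finset.range N, (W (t (n + 1)) ω - W (t n) ω) ^ 2)
        - (1 / 2) * (∑ n ∈ Finset.range N, milstein κ lam θ v₀ t W n ω * (t (n + 1) - t n))
        + ∑ n ∈ Finset.range N,
            (Real.sqrt (1 - ρ ^ 2) * Real.sqrt (milstein κ lam θ v₀ t W n ω))
              * (B (t (n + 1)) ω - B (t n) ω) := by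
  have hθ' : θ ≠ 0 := ne_of_gt hθ
  have hρθ : ρ / θ ≤ 0 := div_nonpos_of_nonpos_of_nonneg (le_of_lt hρ) (le_of_lt hθ)
  have hvnn : ∀ n ≤ N, 0 ≤ milstein κ lam θ v₀ t W n ω := fun n hn =>
    milstein_nonneg hκ hfour hv₀ hpart.lt W ω n hn
  have hΔsum : ∑ n ∈ Finset.range N, (t (n + 1) - t n) = T := by
    rw [Finset.sum_range_sub (fun n => t n), hpart.last, hpart.zero, sub_zero]
  -- key estimate on the W-sum
  have key : ∑ n ∈ Finset.range N, ρ * (Real.sqrt (milstein κ lam θ v₀ t W n ω)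
        * (W (t (n + 1)) ω - W (t n) ω))
      ≤ (-ρ / θ) * v₀ + (-ρ / θ) * ((κ * lam - θ ^ 2 / 4) * T)
        + (-ρ * θ / 4) * ∑ n ∈ Finset.range N, (W (t (n + 1)) ω - W (t n) ω) ^ 2 := by
    have hstep : ∀ n ∈ Finset.range N,
        ρ * (Real.sqrt (milstein κ lam θ v₀ t W n ω) * (W (t (n + 1)) ω - W (t n) ω))
          ≤ (ρ / θ) * (milstein κ lam θ v₀ t W (n + 1) ω - milstein κ lam θ v₀ t W n ω)
            + (-ρ * θ / 4) * (W (t (n + 1)) ω - W (t n) ω) ^ 2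
            + (-ρ / θ) * ((κ * lam - θ ^ 2 / 4) * (t (n + 1) - t n)) := by
      intro n hn
      have hnN : n < N := Finset.mem_range.mp hn
      have hΔ : 0 < t (n + 1) - t n := sub_pos.2 (hpart.lt n hnN)
      have hv' : 0 ≤ milstein κ lam θ v₀ t W (n + 1) ω := hvnn (n + 1) hnN
      have hid := milstein_identity (t := t) (n := n) hκ hΔ (hvnn n (le_of_lt hnN))
        (W := W) (ω := ω)
      set a : ℝ := milstein κ lam θ v₀ t W n ω with ha
      set a' : ℝ := milstein κ lam θ v₀ t W (n + 1) ω with ha'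
      set d : ℝ := W (t (n + 1)) ω - W (t n) ω with hd
      set s : ℝ := t (n + 1) - t n with hs
      have hrw : ρ * (Real.sqrt a * d) = (ρ / θ) * (θ * Real.sqrt a * d) := by
        field_simp
      rw [hrw, hid]
      have h1 : (ρ / θ) * ((1 + κ * s) * a') ≤ (ρ / θ) * a' := by
        apply mul_le_mul_of_nonpos_left _ hρθ
        nlinarith [mul_nonneg (mul_nonneg hκ (le_of_lt hΔ)) hv']
      have h2 : (ρ / θ) * (θ ^ 2 / 4) * d ^ 2 = (ρ * θ / 4) * d ^ 2 := by
        field_simp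
      calc (ρ / θ) * ((1 + κ * s) * a' - a - θ ^ 2 / 4 * d ^ 2 - (κ * lam - θ ^ 2 / 4) * s)
          = (ρ / θ) * ((1 + κ * s) * a') - (ρ / θ) * a - (ρ / θ) * (θ ^ 2 / 4) * d ^ 2
              - (ρ / θ) * ((κ * lam - θ ^ 2 / 4) * s) := by ring
        _ ≤ (ρ / θ) * a' - (ρ / θ) * a - (ρ / θ) * (θ ^ 2 / 4) * d ^ 2
              - (ρ / θ) * ((κ * lam - θ ^ 2 / 4) * s) := by linarith [h1]
        _ = (ρ / θ) * (a' - a) + (-ρ * θ / 4) * d ^ 2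
              + (-ρ / θ) * ((κ * lam - θ ^ 2 / 4) * s) := by rw [h2]; ring
    have hsum := Finset.sum_le_sum hstep
    rw [Finset.sum_add_distrib, Finset.sum_add_distrib, ← Finset.mul_sum, ← Finset.mul_sum,
      Finset.sum_range_sub (fun n => milstein κ lam θ v₀ t W n ω)] at hsum
    have h3 : ∑ x ∈ Finset.range N, (-ρ / θ) * ((κ * lam - θ ^ 2 / 4) * (t (x + 1) - t x))
        = (-ρ / θ) * ((κ * lam - θ ^ 2 / 4) * T) := by
      have hc : ∀ x ∈ Finset.range N,
          (-ρ / θ) * ((κ * lam - θ ^ 2 / 4) * (t (x + 1) - t x))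
            = ((-ρ / θ) * (κ * lam - θ ^ 2 / 4)) * (t (x + 1) - t x) := fun x _ => by ring
      rw [Finset.sum_congr rfl hc, ← Finset.mul_sum, hΔsum]
      ring
    rw [h3] at hsum
    rw [← Finset.mul_sum] at hsum
    have hv0 : milstein κ lam θ v₀ t W 0 ω = v₀ := rfl
    have hvN : 0 ≤ milstein κ lam θ v₀ t W N ω := hvnn N le_rfl
    have hfin : (ρ / θ) * (milstein κ lam θ v₀ t W N ω - milstein κ lam θ v₀ t W 0 ω)
        ≤ (-ρ / θ) * v₀ := by
      rw [hv0]
      have h4 : ρ / θ * (milstein κ lam θ v₀ t W N ω - v₀)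
          = ρ / θ * milstein κ lam θ v₀ t W N ω - ρ / θ * v₀ := by ring
      have h5 : -ρ / θ * v₀ = -(ρ / θ * v₀) := by ring
      have h6 := mul_nonpos_of_nonpos_of_nonneg hρθ hvN
      rw [h4, h5]
      linarith
    rw [← Finset.mul_sum]
    linarith [hsum, hfin]
  -- expand eulerX and conclude
  rw [eulerX_sum]
  have hone : ∀ n ∈ Finset.range N,
      (μ - (1 / 2) * milstein κ lam θ v₀ t W n ω) * (t (n + 1) - t n)
        + Real.sqrt (milstein κ lam θ v₀ t W n ω) *
            (ρ * (W (t (n + 1)) ω - W (t n) ω)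
              + Real.sqrt (1 - ρ ^ 2) * (B (t (n + 1)) ω - B (t n) ω))
      = μ * (t (n + 1) - t n)
        - (1 / 2) * (milstein κ lam θ v₀ t W n ω * (t (n + 1) - t n))
        + ρ * (Real.sqrt (milstein κ lam θ v₀ t W n ω) * (W (t (n + 1)) ω - W (t n) ω))
        + (Real.sqrt (1 - ρ ^ 2) * Real.sqrt (milstein κ lam θ v₀ t W n ω))
            * (B (t (n + 1)) ω - B (t n) ω) := fun n _ => by ring
  rw [Finset.sum_congr rfl hone, Finset.sum_add_distrib, Finset.sum_add_distrib,
    Finset.sum_sub_distrib, ← Finset.mul_sum, ← Finset.mul_sum, ← Finset.mul_sum, hΔsum]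
  have hμT : μ * T ≤ |μ| * T := mul_le_mul_of_nonneg_right (le_abs_self μ) hT
  have hsplit : (-ρ / θ) * (v₀ + (κ * lam - θ ^ 2 / 4) * T)
      = (-ρ / θ) * v₀ + (-ρ / θ) * ((κ * lam - θ ^ 2 / 4) * T) := by ring
  have key' : ρ * ∑ n ∈ Finset.range N,
      Real.sqrt (milstein κ lam θ v₀ t W n ω) * (W (t (n + 1)) ω - W (t n) ω)
      ≤ (-ρ / θ) * v₀ + (-ρ / θ) * ((κ * lam - θ ^ 2 / 4) * T)
        + (-ρ * θ / 4) * ∑ n ∈ Finset.range N, (W (t (n + 1)) ω - W (t n) ω) ^ 2 := by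
    rw [Finset.mul_sum]
    exact key
  linarith [key', hμT, hsplit]

end PW

section Path
variable {Ω : Type*} [MeasurableSpace Ω]

/-- coordinate process on path space -/
def coord : ℝ → (ℝ → ℝ) → ℝ := fun s w => w s

lemma milstein_coord (κ lam θ v₀ : ℝ) (t : ℕ → ℝ) (W : ℝ → Ω → ℝ) (ω : Ω) :
    ∀ n, milstein κ lam θ v₀ t coord n (fun s => W s ω) = milstein κ lam θ v₀ t W n ω := by
  intro n
  induction n with
  | zero => rfl
  | succ n ih => simp only [milstein, ih]; rfl

lemma measurable_milstein_coord (κ lam θ v₀ : ℝ) (t : ℕ → ℝ) (n : ℕ) :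
    Measurable (milstein κ lam θ v₀ t coord n) := by
  induction n with
  | zero => exact measurable_const
  | succ n ih =>
    simp only [milstein]
    apply Measurable.const_mul
    apply Measurable.add _ measurable_const
    apply Measurable.pow_const
    exact ih.sqrt.add (((measurable_pi_apply (t (n+1))).sub (measurable_pi_apply (t n))).const_mul _)

lemma mesh_ge {t : ℕ → ℝ} {N : ℕ} {T : ℝ} (hT : 0 ≤ T) (hpart : IsPartition t N T)
    {k : ℕ} (hk : k < N) : t (k + 1) - t k ≤ mesh t N := by
  have hb : BddAbove (Set.range fun k => ⨆ _ : k ∈ Finset.range N, (t (k + 1) - t k)) := by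
    refine ⟨max T 0, ?_⟩
    rintro x ⟨j, rfl⟩
    show (⨆ _ : j ∈ Finset.range N, (t (j + 1) - t j)) ≤ max T 0
    by_cases hj : j ∈ Finset.range N
    · rw [ciSup_pos hj]
      have hjN : j < N := Finset.mem_range.mp hj
      have h1 : t j ≥ t 0 := partition_le hpart.lt (le_of_lt hjN) (Nat.zero_le j)
      have h2 : t (j + 1) ≤ t N := partition_le hpart.lt le_rfl (Nat.succ_le_of_lt hjN)
      have := hpart.zero
      have := hpart.last
      simp only [le_max_iff]
      left; linarith
    · haveI : IsEmpty (j ∈ Finset.range N) := ⟨fun h => hj h⟩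
      rw [iSup_of_empty', Real.sSup_empty]
      simp [hT]
  have h1 : (⨆ _ : k ∈ Finset.range N, (t (k + 1) - t k)) = t (k + 1) - t k :=
    ciSup_pos (Finset.mem_range.mpr hk)
  calc t (k + 1) - t k = _ := h1.symm
    _ ≤ mesh t N := le_ciSup hb k

end Path

section MainAux

def pS1 (κ lam θ v₀ : ℝ) (t : ℕ → ℝ) (N : ℕ) (w : ℝ → ℝ) : ℝ :=
  ∑ n ∈ Finset.range N, milstein κ lam θ v₀ t coord n w * (t (n + 1) - t n)

def pS2 (t : ℕ → ℝ) (N : ℕ) (w : ℝ → ℝ) : ℝ :=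
  ∑ n ∈ Finset.range N, (w (t (n + 1)) - w (t n)) ^ 2

def psi (κ lam θ v₀ p ρ a C₀ : ℝ) (t : ℕ → ℝ) (N : ℕ) : (ℝ → ℝ) × (ℝ → ℝ) → ℝ≥0∞ :=
  fun q =>
    ENNReal.ofReal (Real.exp (p * C₀ + p * a * pS2 t N q.1 - (p / 2) * pS1 κ lam θ v₀ t N q.1))
      * ∏ n ∈ Finset.range N,
          ENNReal.ofReal (Real.exp ((p * Real.sqrt (1 - ρ ^ 2)
              * Real.sqrt (milstein κ lam θ v₀ t coord n q.1))
            * (q.2 (t (n + 1)) - q.2 (t n))))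

lemma measurable_pS1 (κ lam θ v₀ : ℝ) (t : ℕ → ℝ) (N : ℕ) : Measurable (pS1 κ lam θ v₀ t N) :=
  Finset.measurable_sum _ fun n _ =>
    (measurable_milstein_coord κ lam θ v₀ t n).mul_const _

lemma measurable_pS2 (t : ℕ → ℝ) (N : ℕ) : Measurable (pS2 t N) :=
  Finset.measurable_sum _ fun n _ =>
    (((measurable_pi_apply (t (n+1))).sub (measurable_pi_apply (t n))).pow_const 2)

lemma measurable_psi (κ lam θ v₀ p ρ a C₀ : ℝ) (t : ℕ → ℝ) (N : ℕ) :
    Measurable (psi κ lam θ v₀ p ρ a C₀ t N) := by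
  apply Measurable.mul
  · apply Measurable.ennreal_ofReal
    apply Measurable.exp
    apply Measurable.sub
    · exact measurable_const.add
        (((measurable_pS2 t N).comp measurable_fst).const_mul _)
    · exact (((measurable_pS1 κ lam θ v₀ t N).comp measurable_fst).const_mul _)
  · apply Finset.measurable_prod
    intro n _
    apply Measurable.ennreal_ofReal
    apply Measurable.exp
    apply Measurable.mul
    · exact ((((measurable_milstein_coord κ lam θ v₀ t n).comp measurable_fst).sqrt).const_mul _)
    · exact ((measurable_pi_apply _).comp measurable_snd).sub
        ((measurable_pi_apply _).comp measurable_snd)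

lemma psi_inner {κ lam θ v₀ p ρ a C₀ : ℝ} {t : ℕ → ℝ} {N : ℕ} {μB : Measure (ℝ → ℝ)}
    [IsProbabilityMeasure μB]
    (hp : 0 < p) (hκ : 0 ≤ κ) (hfour : 0 ≤ κ * lam - θ ^ 2 / 4) (hv₀ : 0 ≤ v₀)
    (hρ2 : ρ ^ 2 ≤ 1) (hα : p ^ 2 * (1 - ρ ^ 2) / 2 - p / 2 ≤ 0)
    (ht : ∀ k < N, t k < t (k + 1))
    {g : ℕ → (ℝ → ℝ) → ℝ} (hg : ∀ k, Measurable (g k))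
    (hgind : iIndepFun g μB)
    (hglaw : ∀ n < N, μB.map (g n) = gaussianReal 0 (Real.toNNReal (t (n + 1) - t n)))
    (hgeq : ∀ n < N, ∀ b : ℝ → ℝ, g n b = b (t (n + 1)) - b (t n))
    (w : ℝ → ℝ) :
    ∫⁻ b, psi κ lam θ v₀ p ρ a C₀ t N (w, b) ∂μB
      ≤ ENNReal.ofReal (Real.exp (p * C₀ + p * a * pS2 t N w)) := by
  set c : ℕ → ℝ := fun n =>
    p * Real.sqrt (1 - ρ ^ 2) * Real.sqrt (milstein κ lam θ v₀ t coord n w) with hc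
  have hvnn : ∀ n ≤ N, 0 ≤ milstein κ lam θ v₀ t coord n w :=
    fun n hn => milstein_nonneg hκ hfour hv₀ ht coord w n hn
  -- rewrite the inner product using g
  have hψ : ∀ b : ℝ → ℝ, psi κ lam θ v₀ p ρ a C₀ t N (w, b)
      = ENNReal.ofReal (Real.exp (p * C₀ + p * a * pS2 t N w - (p / 2) * pS1 κ lam θ v₀ t N w))
        * ∏ n ∈ Finset.range N, ENNReal.ofReal (Real.exp (c n * g n b)) := by
    intro b
    unfold psi
    congr 1
    refine Finset.prod_congr rfl fun n hn => ?_
    rw [hgeq n (Finset.mem_range.mp hn) b]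
  simp only [hψ]
  rw [lintegral_const_mul' _ _ ENNReal.ofReal_ne_top]
  set X : ℕ → (ℝ → ℝ) → ℝ≥0∞ := fun n b => ENNReal.ofReal (Real.exp (c n * g n b)) with hX
  have hXmeas : ∀ n, Measurable (X n) := fun n =>
    ((hg n).const_mul _).exp.ennreal_ofReal
  have hXind : iIndepFun X μB := by
    have := hgind.comp (fun n (x : ℝ) => ENNReal.ofReal (Real.exp (c n * x)))
      (fun n => ((measurable_id.const_mul _).exp.ennreal_ofReal))
    exact this
  rw [lintegral_prod_range_of_iIndepFun hXmeas hXind N]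
  have hfactor : ∀ n ∈ Finset.range N,
      ∫⁻ b, X n b ∂μB
        = ENNReal.ofReal (Real.exp (p ^ 2 * (1 - ρ ^ 2) * milstein κ lam θ v₀ t coord n w
            * (t (n + 1) - t n) / 2)) := by
    intro n hn
    have hnN : n < N := Finset.mem_range.mp hn
    have hmm : Measurable fun x : ℝ => ENNReal.ofReal (Real.exp (c n * x)) :=
      ((measurable_id'.const_mul _).exp).ennreal_ofReal
    have heq : ∫⁻ b, X n b ∂μB
        = ∫⁻ x, ENNReal.ofReal (Real.exp (c n * x)) ∂(μB.map (g n)) := by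
      rw [lintegral_map hmm (hg n)]
    have hΔ : 0 ≤ t (n + 1) - t n := (sub_pos.2 (ht n hnN)).le
    rw [heq, hglaw n hnN, gauss_mgf, Real.coe_toNNReal _ hΔ]
    refine congrArg ENNReal.ofReal (congrArg Real.exp ?_)
    have h1 : Real.sqrt (1 - ρ ^ 2) ^ 2 = 1 - ρ ^ 2 := Real.sq_sqrt (by linarith)
    have h2 : Real.sqrt (milstein κ lam θ v₀ t coord n w) ^ 2
        = milstein κ lam θ v₀ t coord n w := Real.sq_sqrt (hvnn n hnN.le)
    simp only [hc]
    linear_combination ((t (n + 1) - t n) / 2 * p ^ 2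
        * Real.sqrt (milstein κ lam θ v₀ t coord n w) ^ 2) * h1
      + ((t (n + 1) - t n) / 2 * p ^ 2 * (1 - ρ ^ 2)) * h2
  rw [Finset.prod_congr rfl hfactor, aux_prod_ofReal_exp,
    ← ENNReal.ofReal_mul (Real.exp_nonneg _), ← Real.exp_add]
  apply ENNReal.ofReal_le_ofReal
  apply Real.exp_le_exp.mpr
  have hsum : ∑ n ∈ Finset.range N, p ^ 2 * (1 - ρ ^ 2) * milstein κ lam θ v₀ t coord n w
      * (t (n + 1) - t n) / 2 = (p ^ 2 * (1 - ρ ^ 2) / 2) * pS1 κ lam θ v₀ t N w := by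
    rw [pS1, Finset.mul_sum]
    exact Finset.sum_congr rfl fun n _ => by ring
  rw [hsum]
  have hS1 : 0 ≤ pS1 κ lam θ v₀ t N w := by
    apply Finset.sum_nonneg
    intro n hn
    exact mul_nonneg (hvnn n (Finset.mem_range.mp hn).le)
      (sub_pos.2 (ht n (Finset.mem_range.mp hn))).le
  nlinarith [hα, hS1]

end MainAux

lemma psi_outer {p a c T : ℝ} {t : ℕ → ℝ} {N : ℕ} {μW : Measure (ℝ → ℝ)}
    [IsProbabilityMeasure μW] (hpa : 0 ≤ p * a)
    (ht : ∀ k < N, t k < t (k + 1))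
    (htel : ∑ n ∈ Finset.range N, (t (n + 1) - t n) = T)
    (hmesh : ∀ n < N, 2 * (p * a) * (t (n + 1) - t n) ≤ 1 / 2)
    {g : ℕ → (ℝ → ℝ) → ℝ} (hg : ∀ k, Measurable (g k))
    (hgind : iIndepFun g μW)
    (hglaw : ∀ n < N, μW.map (g n) = gaussianReal 0 (Real.toNNReal (t (n + 1) - t n)))
    (hgeq : ∀ n < N, ∀ w : ℝ → ℝ, g n w = w (t (n + 1)) - w (t n)) :
    ∫⁻ w, ENNReal.ofReal (Real.exp (c + p * a * pS2 t N w)) ∂μW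
      ≤ ENNReal.ofReal (Real.exp (c + 2 * (p * a) * T)) := by
  have hsplit : ∀ w : ℝ → ℝ, ENNReal.ofReal (Real.exp (c + p * a * pS2 t N w))
      = ENNReal.ofReal (Real.exp c)
        * ∏ n ∈ Finset.range N, ENNReal.ofReal (Real.exp (p * a * (g n w) ^ 2)) := by
    intro w
    rw [aux_prod_ofReal_exp, ← ENNReal.ofReal_mul (Real.exp_nonneg _), ← Real.exp_add]
    congr 2
    rw [pS2, Finset.mul_sum]
    congr 1
    refine Finset.sum_congr rfl fun n hn => ?_
    rw [hgeq n (Finset.mem_range.mp hn) w]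
  simp only [hsplit]
  rw [lintegral_const_mul' _ _ ENNReal.ofReal_ne_top]
  set X : ℕ → (ℝ → ℝ) → ℝ≥0∞ := fun n w => ENNReal.ofReal (Real.exp (p * a * (g n w) ^ 2))
    with hX
  have hXmeas : ∀ n, Measurable (X n) := fun n =>
    (((hg n).pow_const 2).const_mul _).exp.ennreal_ofReal
  have hXind : iIndepFun X μW :=
    hgind.comp (fun n (x : ℝ) => ENNReal.ofReal (Real.exp (p * a * x ^ 2)))
      (fun n => ((measurable_id'.pow_const 2).const_mul _).exp.ennreal_ofReal)
  rw [lintegral_prod_range_of_iIndepFun hXmeas hXind N]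
  have hfac : ∀ n ∈ Finset.range N,
      ∫⁻ w, X n w ∂μW ≤ ENNReal.ofReal (Real.exp (2 * (p * a) * (t (n + 1) - t n))) := by
    intro n hn
    have hnN : n < N := Finset.mem_range.mp hn
    have hΔ : 0 ≤ t (n + 1) - t n := (sub_pos.2 (ht n hnN)).le
    have hmm : Measurable fun x : ℝ => ENNReal.ofReal (Real.exp (p * a * x ^ 2)) :=
      ((measurable_id'.pow_const 2).const_mul _).exp.ennreal_ofReal
    have heq : ∫⁻ w, X n w ∂μW
        = ∫⁻ x, ENNReal.ofReal (Real.exp (p * a * x ^ 2)) ∂(μW.map (g n)) := by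
      rw [lintegral_map hmm (hg n)]
    rw [heq, hglaw n hnN]
    have hc2 : 2 * (p * a) * ((Real.toNNReal (t (n + 1) - t n)) : ℝ) ≤ 1 / 2 := by
      rw [Real.coe_toNNReal _ hΔ]
      exact hmesh n hnN
    calc ∫⁻ x, ENNReal.ofReal (Real.exp (p * a * x ^ 2))
          ∂(gaussianReal 0 (Real.toNNReal (t (n + 1) - t n)))
        ≤ ENNReal.ofReal (Real.exp (2 * (p * a) * ((Real.toNNReal (t (n + 1) - t n)) : ℝ))) :=
          gauss_sq_mgf_le hpa hc2
      _ = ENNReal.ofReal (Real.exp (2 * (p * a) * (t (n + 1) - t n))) := by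
          rw [Real.coe_toNNReal _ hΔ]
  calc ENNReal.ofReal (Real.exp c) * ∏ n ∈ Finset.range N, ∫⁻ w, X n w ∂μW
      ≤ ENNReal.ofReal (Real.exp c)
        * ∏ n ∈ Finset.range N, ENNReal.ofReal (Real.exp (2 * (p * a) * (t (n + 1) - t n))) :=
        mul_le_mul_right (Finset.prod_le_prod' hfac) _
    _ = ENNReal.ofReal (Real.exp (c + 2 * (p * a) * T)) := by
        rw [aux_prod_ofReal_exp, ← ENNReal.ofReal_mul (Real.exp_nonneg _), ← Real.exp_add]
        congr 2
        rw [← Finset.mul_sum, htel]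

lemma brownian_increments {Ω : Type*} [MeasurableSpace Ω] {P : Measure Ω}
    [IsProbabilityMeasure P] {V : ℝ → Ω → ℝ} (hV : IsBrownian P V)
    {t : ℕ → ℝ} {N : ℕ} {T : ℝ} (hpart : IsPartition t N T) :
    (∀ k, Measurable (fun w : ℝ → ℝ => w (t (min (k + 1) N)) - w (t (min k N)))) ∧
    iIndepFun
      (fun k (w : ℝ → ℝ) => w (t (min (k + 1) N)) - w (t (min k N)))
      (P.map (fun ω (s : ℝ) => V s ω)) ∧
    (∀ n < N, (P.map (fun ω (s : ℝ) => V s ω)).map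
        (fun w : ℝ → ℝ => w (t (min (n + 1) N)) - w (t (min n N)))
      = gaussianReal 0 (Real.toNNReal (t (n + 1) - t n))) ∧
    (∀ n < N, ∀ w : ℝ → ℝ, w (t (min (n + 1) N)) - w (t (min n N))
      = w (t (n + 1)) - w (t n)) := by
  have hg : ∀ k, Measurable (fun w : ℝ → ℝ => w (t (min (k + 1) N)) - w (t (min k N))) :=
    fun k => (measurable_pi_apply _).sub (measurable_pi_apply _)
  have humono : Monotone (fun k => t (min k N)) := fun i j hij =>
    partition_le hpart.lt (min_le_right j N) (min_le_min hij le_rfl)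
  have hφ : Measurable (fun ω (s : ℝ) => V s ω) :=
    measurable_pi_lambda _ fun s => hV.meas s
  refine ⟨hg, ?_, ?_, ?_⟩
  · exact iIndepFun_map_of_comp hφ hg (hV.indep (fun k => t (min k N)) humono)
  · intro n hn
    rw [Measure.map_map (hg n) hφ]
    have hcomp : ((fun w : ℝ → ℝ => w (t (min (n + 1) N)) - w (t (min n N)))
          ∘ (fun ω (s : ℝ) => V s ω))
        = fun ω => V (t (n + 1)) ω - V (t n) ω := by
      funext ω
      simp only [Function.comp_apply]
      rw [min_eq_left (Nat.succ_le_of_lt hn), min_eq_left hn.le]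
    rw [hcomp]
    have h0 : 0 ≤ t n := by
      have := partition_le hpart.lt hn.le (Nat.zero_le n)
      rwa [hpart.zero] at this
    exact hV.gauss (t n) (t (n + 1)) h0 (hpart.lt n hn).le
  · intro n hn w
    rw [min_eq_left (Nat.succ_le_of_lt hn), min_eq_left hn.le]

set_option maxHeartbeats 1000000 in
/-- under the minimal Feller condition `ν = 2κλ/θ² > 1/2` and negative
correlation `ρ < 0`, for any measurable payoff `f` with `sup_x |f(x)e^{-x}| < ∞` there are
`ε, δ > 0` and `C < ∞` such that for every partition of `[0,T]` with mesh `< δ` the Euler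
scheme for the log-price satisfies `E|f(x_N)|^{1+ε} ≤ C`. -/
theorem statement0
    {Ω : Type*} [MeasurableSpace Ω] (P : Measure Ω) [IsProbabilityMeasure P]
    (W B : ℝ → Ω → ℝ) (hW : IsBrownian P W) (hB : IsBrownian P B)
    (hWB : IndepFun (fun ω => fun s : ℝ => W s ω) (fun ω => fun s : ℝ => B s ω) P)
    (κ lam θ v₀ T x₀ μ ρ : ℝ)
    (hκ : 0 < κ) (hlam : 0 < lam) (hθ : 0 < θ) (hv₀ : 0 < v₀) (hT : 0 < T)
    (hFeller : 1 / 2 < 2 * κ * lam / θ ^ 2) (hρ₁ : -1 ≤ ρ) (hρ : ρ < 0)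
    (f : ℝ → ℝ) (hf : Measurable f) (hfgrowth : ∃ K : ℝ, ∀ x : ℝ, |f x * Real.exp (-x)| ≤ K) :
    ∃ ε δ C : ℝ, 0 < ε ∧ 0 < δ ∧
      ∀ (N : ℕ) (t : ℕ → ℝ), IsPartition t N T → mesh t N < δ →
        ∫⁻ ω, ENNReal.ofReal (|f (eulerX κ lam θ v₀ x₀ μ ρ t W B N ω)| ^ (1 + ε)) ∂P
          ≤ ENNReal.ofReal C := by
  classical
  obtain ⟨K, hK⟩ := hfgrowth
  have hK0 : 0 ≤ K := le_trans (abs_nonneg _) (hK 0)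
  have hθ2 : (0:ℝ) < θ ^ 2 := by positivity
  have hfour : 0 ≤ κ * lam - θ ^ 2 / 4 := by
    rw [lt_div_iff₀ hθ2] at hFeller
    linarith
  have hρ2 : ρ ^ 2 ≤ 1 := by
    nlinarith [mul_nonneg (by linarith : (0:ℝ) ≤ -ρ) (by linarith : (0:ℝ) ≤ 1 + ρ)]
  have hρsq : 0 < ρ ^ 2 := by nlinarith [mul_pos_of_neg_of_neg hρ hρ]
  obtain ⟨ε, hεdef⟩ : ∃ ε : ℝ, ε = ρ ^ 2 / 2 := ⟨_, rfl⟩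
  have hε0 : 0 < ε := by rw [hεdef]; linarith
  obtain ⟨p, hp⟩ : ∃ p : ℝ, p = 1 + ε := ⟨_, rfl⟩
  have hp0 : 0 < p := by rw [hp]; linarith
  have hα : p ^ 2 * (1 - ρ ^ 2) / 2 - p / 2 ≤ 0 := by
    have h1 : p * (1 - ρ ^ 2) ≤ 1 := by rw [hp, hεdef]; nlinarith [sq_nonneg ρ]
    have h2 := mul_le_mul_of_nonneg_left h1 (le_of_lt hp0)
    nlinarith [h2]
  obtain ⟨a, ha⟩ : ∃ a : ℝ, a = -ρ * θ / 4 := ⟨_, rfl⟩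
  have ha0 : 0 < a := by rw [ha]; nlinarith [mul_pos (neg_pos.mpr hρ) hθ]
  have hpa : 0 ≤ p * a := le_of_lt (mul_pos hp0 ha0)
  obtain ⟨δ, hδdef⟩ : ∃ δ : ℝ, δ = 1 / (8 * (p * a) + 1) := ⟨_, rfl⟩
  have hδ0 : 0 < δ := by rw [hδdef]; positivity
  obtain ⟨C₀, hC₀⟩ : ∃ c : ℝ, c = x₀ + |μ| * T + (-ρ / θ) * (v₀ + (κ * lam - θ ^ 2 / 4) * T) := ⟨_, rfl⟩
  refine ⟨ε, δ, K ^ p * Real.exp (p * C₀ + 2 * (p * a) * T), hε0, hδ0, ?_⟩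
  intro N t hpart hmesh
  have htel : ∑ n ∈ Finset.range N, (t (n + 1) - t n) = T := by
    rw [Finset.sum_range_sub (fun n => t n), hpart.last, hpart.zero, sub_zero]
  have hmesh' : ∀ n < N, 2 * (p * a) * (t (n + 1) - t n) ≤ 1 / 2 := by
    intro n hn
    have h1 : t (n + 1) - t n ≤ mesh t N := mesh_ge hT.le hpart hn
    have h2 : t (n + 1) - t n < δ := lt_of_le_of_lt h1 hmesh
    have h3 : 2 * (p * a) * (t (n + 1) - t n) ≤ 2 * (p * a) * δ :=
      mul_le_mul_of_nonneg_left h2.le (by positivity)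
    have h8 : (0:ℝ) < 8 * (p * a) + 1 := by positivity
    have h4 : 2 * (p * a) * δ ≤ 1 / 2 := by
      rw [hδdef, mul_one_div, div_le_div_iff₀ h8 two_pos]
      linarith
    exact le_trans h3 h4
  -- path maps and increments
  have hφW : Measurable (fun ω => fun s : ℝ => W s ω) :=
    measurable_pi_lambda _ fun s => hW.meas s
  have hφB : Measurable (fun ω => fun s : ℝ => B s ω) :=
    measurable_pi_lambda _ fun s => hB.meas s
  haveI hPW : IsProbabilityMeasure (P.map (fun ω => fun s : ℝ => W s ω)) :=
    Measure.isProbabilityMeasure_map hφW.aemeasurable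
  haveI hPB : IsProbabilityMeasure (P.map (fun ω => fun s : ℝ => B s ω)) :=
    Measure.isProbabilityMeasure_map hφB.aemeasurable
  obtain ⟨hgW, hgindW, hglawW, hgeqW⟩ := brownian_increments hW hpart
  obtain ⟨hgB, hgindB, hglawB, hgeqB⟩ := brownian_increments hB hpart
  have hmap : P.map (fun ω => ((fun s : ℝ => W s ω), (fun s : ℝ => B s ω)))
      = (P.map (fun ω => fun s : ℝ => W s ω)).prod (P.map (fun ω => fun s : ℝ => B s ω)) :=
    (indepFun_iff_map_prod_eq_prod_map_map hφW.aemeasurable hφB.aemeasurable).mp hWB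
  -- pointwise bound
  have hpt : ∀ ω : Ω, ENNReal.ofReal (|f (eulerX κ lam θ v₀ x₀ μ ρ t W B N ω)| ^ (1 + ε))
      ≤ ENNReal.ofReal (K ^ p)
        * psi κ lam θ v₀ p ρ a C₀ t N ((fun s : ℝ => W s ω), (fun s : ℝ => B s ω)) := by
    intro ω
    have hfb : ∀ x : ℝ, |f x| ≤ K * Real.exp x := by
      intro x
      have h1 := hK x
      rw [abs_mul, abs_of_pos (Real.exp_pos _)] at h1
      have h2 : |f x| * Real.exp (-x) * Real.exp x ≤ K * Real.exp x :=
        mul_le_mul_of_nonneg_right h1 (Real.exp_nonneg x)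
      rwa [mul_assoc, ← Real.exp_add, neg_add_cancel, Real.exp_zero, mul_one] at h2
    obtain ⟨x, hx⟩ : ∃ x : ℝ, x = eulerX κ lam θ v₀ x₀ μ ρ t W B N ω := ⟨_, rfl⟩
    rw [← hx]
    have h3 : |f x| ^ (1 + ε) ≤ (K * Real.exp x) ^ (1 + ε) :=
      Real.rpow_le_rpow (abs_nonneg _) (hfb x) (by positivity)
    have h4 : (K * Real.exp x) ^ (1 + ε) = K ^ p * Real.exp (x * p) := by
      rw [← hp, Real.mul_rpow hK0 (Real.exp_nonneg _)]
      congr 1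
      rw [Real.rpow_def_of_pos (Real.exp_pos x), Real.log_exp]
    have hxle := euler_pointwise (x₀ := x₀) (μ := μ) hκ.le hθ hρ hfour hv₀.le hT.le hpart W B ω
    rw [← hx] at hxle
    have hS2eq : pS2 t N (fun s : ℝ => W s ω)
        = ∑ n ∈ Finset.range N, (W (t (n + 1)) ω - W (t n) ω) ^ 2 := rfl
    have hS1eq : pS1 κ lam θ v₀ t N (fun s : ℝ => W s ω)
        = ∑ n ∈ Finset.range N, milstein κ lam θ v₀ t W n ω * (t (n + 1) - t n) := by
      unfold pS1
      exact Finset.sum_congr rfl fun n _ => by rw [milstein_coord]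
    have hxp : x * p ≤ p * C₀ + p * a * pS2 t N (fun s : ℝ => W s ω)
        - (p / 2) * pS1 κ lam θ v₀ t N (fun s : ℝ => W s ω)
        + ∑ n ∈ Finset.range N, (p * Real.sqrt (1 - ρ ^ 2)
            * Real.sqrt (milstein κ lam θ v₀ t coord n (fun s : ℝ => W s ω)))
            * (B (t (n + 1)) ω - B (t n) ω) := by
      rw [hS2eq, hS1eq]
      have hpsum : ∑ n ∈ Finset.range N, (p * Real.sqrt (1 - ρ ^ 2)
            * Real.sqrt (milstein κ lam θ v₀ t coord n (fun s : ℝ => W s ω)))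
            * (B (t (n + 1)) ω - B (t n) ω)
          = p * ∑ n ∈ Finset.range N, (Real.sqrt (1 - ρ ^ 2)
              * Real.sqrt (milstein κ lam θ v₀ t W n ω)) * (B (t (n + 1)) ω - B (t n) ω) := by
        rw [Finset.mul_sum]
        refine Finset.sum_congr rfl fun n _ => ?_
        rw [milstein_coord]
        ring
      rw [hpsum, hC₀, ha]
      generalize (∑ n ∈ Finset.range N, (W (t (n + 1)) ω - W (t n) ω) ^ 2) = A at hxle ⊢
      generalize (∑ n ∈ Finset.range N,
        milstein κ lam θ v₀ t W n ω * (t (n + 1) - t n)) = Sv at hxle ⊢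
      generalize (∑ n ∈ Finset.range N, (Real.sqrt (1 - ρ ^ 2)
        * Real.sqrt (milstein κ lam θ v₀ t W n ω)) * (B (t (n + 1)) ω - B (t n) ω)) = D
        at hxle ⊢
      generalize (x₀ + |μ| * T + -ρ / θ * (v₀ + (κ * lam - θ ^ 2 / 4) * T)) = c0 at hxle ⊢
      have h5 := mul_le_mul_of_nonneg_left hxle hp0.le
      linarith only [h5]
    calc ENNReal.ofReal (|f x| ^ (1 + ε))
        ≤ ENNReal.ofReal (K ^ p * Real.exp (x * p)) := by
          apply ENNReal.ofReal_le_ofReal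
          rw [← h4]; exact h3
      _ ≤ ENNReal.ofReal (K ^ p * (Real.exp (p * C₀ + p * a * pS2 t N (fun s : ℝ => W s ω)
            - (p / 2) * pS1 κ lam θ v₀ t N (fun s : ℝ => W s ω))
            * Real.exp (∑ n ∈ Finset.range N, (p * Real.sqrt (1 - ρ ^ 2)
              * Real.sqrt (milstein κ lam θ v₀ t coord n (fun s : ℝ => W s ω)))
              * (B (t (n + 1)) ω - B (t n) ω)))) := by
          apply ENNReal.ofReal_le_ofReal
          apply mul_le_mul_of_nonneg_left _ (Real.rpow_nonneg hK0 _)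
          rw [← Real.exp_add]
          exact Real.exp_le_exp.mpr (by linarith [hxp])
      _ = ENNReal.ofReal (K ^ p)
            * psi κ lam θ v₀ p ρ a C₀ t N ((fun s : ℝ => W s ω), (fun s : ℝ => B s ω)) := by
          simp only [psi]
          rw [ENNReal.ofReal_mul (Real.rpow_nonneg hK0 _),
            ENNReal.ofReal_mul (Real.exp_nonneg _), aux_prod_ofReal_exp]
  -- the chain of integral estimates
  calc ∫⁻ ω, ENNReal.ofReal (|f (eulerX κ lam θ v₀ x₀ μ ρ t W B N ω)| ^ (1 + ε)) ∂P
      ≤ ∫⁻ ω, ENNReal.ofReal (K ^ p)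
          * psi κ lam θ v₀ p ρ a C₀ t N ((fun s : ℝ => W s ω), (fun s : ℝ => B s ω)) ∂P :=
        lintegral_mono hpt
    _ = ENNReal.ofReal (K ^ p)
          * ∫⁻ ω, psi κ lam θ v₀ p ρ a C₀ t N
              ((fun s : ℝ => W s ω), (fun s : ℝ => B s ω)) ∂P :=
        lintegral_const_mul' _ _ ENNReal.ofReal_ne_top
    _ = ENNReal.ofReal (K ^ p)
          * ∫⁻ q, psi κ lam θ v₀ p ρ a C₀ t N q
              ∂((P.map (fun ω => fun s : ℝ => W s ω)).prod
                  (P.map (fun ω => fun s : ℝ => B s ω))) := by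
        rw [← hmap]
        exact congrArg _ (lintegral_map (measurable_psi κ lam θ v₀ p ρ a C₀ t N)
          (hφW.prodMk hφB)).symm
    _ = ENNReal.ofReal (K ^ p)
          * ∫⁻ w, (∫⁻ b, psi κ lam θ v₀ p ρ a C₀ t N (w, b)
              ∂(P.map (fun ω => fun s : ℝ => B s ω)))
            ∂(P.map (fun ω => fun s : ℝ => W s ω)) := by
        rw [lintegral_prod _ (measurable_psi κ lam θ v₀ p ρ a C₀ t N).aemeasurable]
    _ ≤ ENNReal.ofReal (K ^ p)
          * ∫⁻ w, ENNReal.ofReal (Real.exp (p * C₀ + p * a * pS2 t N w))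
            ∂(P.map (fun ω => fun s : ℝ => W s ω)) := by
        apply mul_le_mul_right
        apply lintegral_mono
        intro w
        exact psi_inner hp0 hκ.le hfour hv₀.le hρ2 hα hpart.lt hgB hgindB hglawB hgeqB w
    _ ≤ ENNReal.ofReal (K ^ p)
          * ENNReal.ofReal (Real.exp (p * C₀ + 2 * (p * a) * T)) :=
        mul_le_mul_right (psi_outer hpa hpart.lt htel hmesh' hgW hgindW hglawW hgeqW) _
    _ = ENNReal.ofReal (K ^ p * Real.exp (p * C₀ + 2 * (p * a) * T)) :=
        (ENNReal.ofReal_mul (Real.rpow_nonneg hK0 _)).symm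


end
end

section
/- Assume ν = 2κλ/θ² > 1/2. For every q ≥ 1 there exists a constant C depending only on q, κ, λ, θ, T (in particular independent of v₀ and of the partition) such that for every partition 0 = t₀ < ⋯ < t_N = T one has sup_{t∈[0,T]} E[ ( v̂_{η(t)} / v̂_t )^q ] ≤ C. -/
open MeasureTheory ProbabilityTheory
open scoped ENNReal NNReal

noncomputable section

variable {Ω : Type*} [MeasurableSpace Ω]

section AuxLemmas
open Real

lemma lintegral_exp_gaussianReal (a : ℝ) {v : ℝ≥0} (hv : v ≠ 0) :
    ∫⁻ x, ENNReal.ofReal (Real.exp (a * x)) ∂(gaussianReal 0 v) =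
      ENNReal.ofReal (Real.exp (a ^ 2 * v / 2)) := by
  have hv0 : (0:ℝ) < (v:ℝ) := by exact_mod_cast pos_iff_ne_zero.mpr hv
  have hf : Measurable fun x : ℝ => ENNReal.ofReal (Real.exp (a * x)) := by fun_prop
  rw [gaussianReal_of_var_ne_zero 0 hv,
    lintegral_withDensity_eq_lintegral_mul _ (measurable_gaussianPDF 0 v) hf]
  have hkey : ∀ x : ℝ, gaussianPDF 0 v x * ENNReal.ofReal (Real.exp (a * x)) =
      ENNReal.ofReal (Real.exp (a ^ 2 * v / 2)) * gaussianPDF (a * v) v x := by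
    intro x
    rw [gaussianPDF, gaussianPDF, gaussianPDFReal, gaussianPDFReal,
      ← ENNReal.ofReal_mul (by positivity), ← ENNReal.ofReal_mul (Real.exp_nonneg _)]
    congr 1
    have hexp : rexp (-(x - 0)^2/(2*(v:ℝ))) * rexp (a*x)
        = rexp (a^2*(v:ℝ)/2) * rexp (-(x - a*(v:ℝ))^2/(2*(v:ℝ))) := by
      rw [← Real.exp_add, ← Real.exp_add]; congr 1; field_simp; ring
    linear_combination (√(2*π*(v:ℝ)))⁻¹ * hexp
  simp only [Pi.mul_apply, hkey]
  rw [lintegral_const_mul' _ _ ENNReal.ofReal_ne_top, lintegral_gaussianPDF_eq_one (a*v) hv,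
    mul_one]

lemma pow_le_exp_aux (k : ℕ) {Δ : ℝ} (hΔ : 0 < Δ) (x : ℝ) :
    x ^ (2*k) ≤ (2*k).factorial * Δ^k *
      (Real.exp ((Real.sqrt Δ)⁻¹ * x) + Real.exp (-((Real.sqrt Δ)⁻¹ * x))) := by
  have hs : 0 < Real.sqrt Δ := Real.sqrt_pos.mpr hΔ
  set u := (Real.sqrt Δ)⁻¹ * x with hu
  have hx : x = Real.sqrt Δ * u := by rw [hu]; field_simp
  have h1 : x^(2*k) = Δ^k * u^(2*k) := by
    rw [hx, mul_pow, pow_mul, Real.sq_sqrt hΔ.le]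
  have h2 : u^(2*k) = |u|^(2*k) := by
    rw [pow_abs, abs_of_nonneg (Even.pow_nonneg (even_two_mul k) u)]
  have h3 : |u|^(2*k) ≤ (2*k).factorial * Real.exp |u| := by
    have hsum := Real.sum_le_exp_of_nonneg (abs_nonneg u) (2*k+1)
    have hsingle : |u|^(2*k) / (2*k).factorial ≤ ∑ i ∈ Finset.range (2*k+1), |u|^i / i.factorial :=
      Finset.single_le_sum (f := fun i => |u|^i / (i.factorial : ℝ))
        (fun i _ => by positivity) (Finset.self_mem_range_succ (2*k))
    have hfac : (0:ℝ) < (2*k).factorial := by exact_mod_cast (2*k).factorial_pos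
    rw [div_le_iff₀ hfac] at hsingle
    nlinarith [hsum, hfac]
  have h4 : Real.exp |u| ≤ Real.exp u + Real.exp (-u) := by
    rcases abs_cases u with ⟨h, _⟩ | ⟨h, _⟩ <;> rw [h] <;>
      [linarith [Real.exp_pos (-u)]; linarith [Real.exp_pos u]]
  have hΔk : (0:ℝ) ≤ Δ^k := by positivity
  have hfac : (0:ℝ) ≤ (2*k).factorial := by positivity
  calc x^(2*k) = Δ^k * |u|^(2*k) := by rw [h1, h2]
    _ ≤ Δ^k * ((2*k).factorial * (Real.exp u + Real.exp (-u))) := by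
        apply mul_le_mul_of_nonneg_left _ hΔk
        calc |u|^(2*k) ≤ (2*k).factorial * Real.exp |u| := h3
          _ ≤ (2*k).factorial * (Real.exp u + Real.exp (-u)) :=
            mul_le_mul_of_nonneg_left h4 hfac
    _ = (2*k).factorial * Δ^k * (Real.exp u + Real.exp (-u)) := by ring

lemma IsPartition.mono' {t : ℕ → ℝ} {N : ℕ} {T : ℝ} (ht : IsPartition t N T) :
    ∀ i j, i ≤ j → j ≤ N → t i ≤ t j := by
  intro i j hij hjN
  induction j with
  | zero => rw [Nat.le_zero.mp hij]
  | succ j ih =>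
      rcases Nat.lt_succ_iff_lt_or_eq.mp (Nat.lt_succ_of_le hij) with h | h
      · exact le_trans (ih (by omega) (by omega)) (ht.lt j (by omega)).le
      · rw [h]

lemma milstein_pos {W : ℝ → Ω → ℝ} {κ lam θ v₀ T : ℝ} {t : ℕ → ℝ} {N : ℕ}
    (hκ : 0 < κ) (hc : 0 < κ * lam - θ ^ 2 / 4) (ht : IsPartition t N T) (hv₀ : 0 < v₀)
    (ω : Ω) : ∀ n, n ≤ N → 0 < milstein κ lam θ v₀ t W n ω := by
  intro n
  induction n with
  | zero => intro _; simpa [milstein] using hv₀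
  | succ n ih =>
      intro h
      have hstep : 0 < t (n + 1) - t n := sub_pos.mpr (ht.lt n (by omega))
      have h1 : 0 < 1 + κ * (t (n + 1) - t n) := by nlinarith
      simp only [milstein]
      have h2 : 0 < (Real.sqrt (milstein κ lam θ v₀ t W n ω)
            + (θ / 2) * (W (t (n + 1)) ω - W (t n) ω)) ^ 2
          + (κ * lam - θ ^ 2 / 4) * (t (n + 1) - t n) := by
        nlinarith [sq_nonneg (Real.sqrt (milstein κ lam θ v₀ t W n ω)
            + (θ / 2) * (W (t (n + 1)) ω - W (t n) ω))]
      exact mul_pos (one_div_pos.mpr h1) h2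

set_option maxHeartbeats 1000000 in
lemma ratio_rpow_bound {κ lam θ T q : ℝ} (hκ : 0 < κ) (hθ : 0 < θ) (hT : 0 < T) (hq : 1 ≤ q)
    (hc : 0 < κ * lam - θ ^ 2 / 4) (k : ℕ) (hqk : q ≤ (k : ℝ))
    {v w Δ : ℝ} (hv : 0 < v) (hΔ : 0 < Δ) (hΔT : Δ ≤ T) :
    (v * (1 + κ * Δ) / ((Real.sqrt v + (θ / 2) * w) ^ 2 + (κ * lam - θ ^ 2 / 4) * Δ)) ^ q
      ≤ (1 + κ * T) ^ q * (4 ^ q + 1)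
        + ((1 + κ * T) * θ ^ 2 / ((κ * lam - θ ^ 2 / 4) * Δ)) ^ k * w ^ (2 * k) := by
  have hq0 : 0 ≤ q := by linarith
  have hsv : 0 ≤ Real.sqrt v := Real.sqrt_nonneg v
  have hsv2 : Real.sqrt v ^ 2 = v := Real.sq_sqrt hv.le
  have hden : 0 < 1 + κ * Δ := by nlinarith
  have hT1 : (1:ℝ) ≤ 1 + κ * T := by nlinarith
  have hbase : 0 ≤ ((1 + κ * T) * θ ^ 2 / ((κ * lam - θ ^ 2 / 4) * Δ)) ^ k := by positivity
  have hwk : 0 ≤ w ^ (2 * k) := Even.pow_nonneg (even_two_mul k) w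
  have hA1 : 0 ≤ (1 + κ * T) ^ q := Real.rpow_nonneg (by linarith) q
  have hsecond : 0 ≤ ((1 + κ * T) * θ ^ 2 / ((κ * lam - θ ^ 2 / 4) * Δ)) ^ k * w ^ (2 * k) :=
    mul_nonneg hbase hwk
  set tv := (Real.sqrt v + (θ / 2) * w) ^ 2 + (κ * lam - θ ^ 2 / 4) * Δ with htv
  clear_value tv
  by_cases hcase : θ * |w| ≤ Real.sqrt v
  · -- ratio ≤ 4 (1 + κT)
    have habs : |(θ / 2) * w| ≤ Real.sqrt v / 2 := by
      rw [abs_mul, abs_of_nonneg (by positivity : (0:ℝ) ≤ θ / 2)]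
      calc θ / 2 * |w| = θ * |w| / 2 := by ring
        _ ≤ Real.sqrt v / 2 := by linarith
    have hX : Real.sqrt v / 2 ≤ Real.sqrt v + (θ / 2) * w := by
      have := neg_abs_le ((θ / 2) * w)
      linarith
    have hXsq : v / 4 ≤ (Real.sqrt v + (θ / 2) * w) ^ 2 := by nlinarith
    have htvge : v / 4 ≤ tv := by rw [htv]; nlinarith
    have htvpos : 0 < tv := lt_of_lt_of_le (by linarith) htvge
    have hub : v * (1 + κ * Δ) / tv ≤ (1 + κ * T) * 4 := by
      rw [div_le_iff₀ htvpos]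
      nlinarith [mul_le_mul_of_nonneg_left htvge (by linarith : (0:ℝ) ≤ (1 + κ * T) * 4),
        mul_nonneg hv.le (mul_nonneg hκ.le (by linarith : (0:ℝ) ≤ T - Δ))]
    have hrnn : 0 ≤ v * (1 + κ * Δ) / tv := div_nonneg (by positivity) htvpos.le
    calc (v * (1 + κ * Δ) / tv) ^ q ≤ ((1 + κ * T) * 4) ^ q :=
          Real.rpow_le_rpow hrnn hub hq0
      _ = (1 + κ * T) ^ q * 4 ^ q := Real.mul_rpow (by linarith) (by norm_num)
      _ ≤ (1 + κ * T) ^ q * (4 ^ q + 1) := by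
          rw [mul_add, mul_one]; linarith
      _ ≤ _ := by linarith
  · push_neg at hcase
    have htvge : (κ * lam - θ ^ 2 / 4) * Δ ≤ tv := by rw [htv]; nlinarith [sq_nonneg (Real.sqrt v + (θ / 2) * w)]
    have hcΔ : 0 < (κ * lam - θ ^ 2 / 4) * Δ := by positivity
    have htvpos : 0 < tv := lt_of_lt_of_le hcΔ htvge
    have hrnn : 0 ≤ v * (1 + κ * Δ) / tv := div_nonneg (by positivity) htvpos.le
    have hvlt : v < θ ^ 2 * w ^ 2 := by
      have h := pow_lt_pow_left₀ hcase hsv (n := 2) two_ne_zero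
      rw [hsv2, mul_pow, sq_abs] at h
      exact h
    have hub2 : v * (1 + κ * Δ) / tv ≤ (1 + κ * T) * θ ^ 2 * w ^ 2 / ((κ * lam - θ ^ 2 / 4) * Δ) := by
      apply div_le_div₀ (by positivity) _ hcΔ htvge
      nlinarith [mul_nonneg (by nlinarith : (0:ℝ) ≤ θ ^ 2 * w ^ 2 - v) hden.le,
        mul_nonneg (mul_nonneg (by positivity : (0:ℝ) ≤ θ ^ 2 * w ^ 2) hκ.le)
          (by linarith : (0:ℝ) ≤ T - Δ)]
    by_cases hsmall : v * (1 + κ * Δ) / tv ≤ 1 + κ * T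
    · calc (v * (1 + κ * Δ) / tv) ^ q ≤ (1 + κ * T) ^ q := Real.rpow_le_rpow hrnn hsmall hq0
        _ ≤ (1 + κ * T) ^ q * (4 ^ q + 1) := by
            rw [mul_add, mul_one]
            have := mul_nonneg hA1 (Real.rpow_nonneg (by norm_num : (0:ℝ) ≤ 4) q)
            linarith
        _ ≤ _ := by linarith
    · push_neg at hsmall
      have h1r : 1 ≤ v * (1 + κ * Δ) / tv := by linarith
      have hy : (1 + κ * T) * θ ^ 2 * w ^ 2 / ((κ * lam - θ ^ 2 / 4) * Δ)
          = ((1 + κ * T) * θ ^ 2 / ((κ * lam - θ ^ 2 / 4) * Δ)) * w ^ 2 := by ring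
      calc (v * (1 + κ * Δ) / tv) ^ q ≤ (v * (1 + κ * Δ) / tv) ^ (k : ℝ) :=
            Real.rpow_le_rpow_of_exponent_le h1r hqk
        _ = (v * (1 + κ * Δ) / tv) ^ k := Real.rpow_natCast _ k
        _ ≤ (((1 + κ * T) * θ ^ 2 / ((κ * lam - θ ^ 2 / 4) * Δ)) * w ^ 2) ^ k := by
            apply pow_le_pow_left₀ hrnn
            rw [← hy]; exact hub2
        _ = ((1 + κ * T) * θ ^ 2 / ((κ * lam - θ ^ 2 / 4) * Δ)) ^ k * w ^ (2 * k) := by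
            rw [mul_pow, pow_mul]
        _ ≤ _ := by
            have h4q := Real.rpow_nonneg (by norm_num : (0:ℝ) ≤ 4) q
            have : 0 ≤ (1 + κ * T) ^ q * (4 ^ q + 1) := mul_nonneg hA1 (by linarith)
            linarith

end AuxLemmas

set_option maxHeartbeats 1000000 in
/-- under `ν = 2κλ/θ² > 1/2`, for every `q ≥ 1` there is a constant `C`
depending only on `q, κ, λ, θ, T` (independent of `v₀` and of the partition) such that
`sup_{t ∈ [0,T]} E[(v̂_{η(t)} / v̂_t)^q] ≤ C` (recall `v̂_{η(t)} = v_{n(t)}`). -/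
theorem statement6
    {Ω : Type*} [MeasurableSpace Ω] (P : Measure Ω) [IsProbabilityMeasure P]
    (W : ℝ → Ω → ℝ) (hW : IsBrownian P W)
    (κ lam θ T : ℝ)
    (hκ : 0 < κ) (hlam : 0 < lam) (hθ : 0 < θ) (hT : 0 < T)
    (hFeller : 1 / 2 < 2 * κ * lam / θ ^ 2)
    (q : ℝ) (hq : 1 ≤ q) :
    ∃ C : ℝ, ∀ v₀ : ℝ, 0 < v₀ → ∀ (N : ℕ) (t : ℕ → ℝ), IsPartition t N T →
      ∀ s ∈ Set.Icc (0 : ℝ) T,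
        ∫⁻ ω, ENNReal.ofReal
            ((milstein κ lam θ v₀ t W (nIdx t N s) ω / hatV κ lam θ v₀ t N W s ω) ^ q) ∂P
          ≤ ENNReal.ofReal C := by
  have hθ2 : (0:ℝ) < θ ^ 2 := by positivity
  have hc : 0 < κ * lam - θ ^ 2 / 4 := by
    have h := mul_lt_mul_of_pos_right hFeller hθ2
    rw [div_mul_cancel₀ _ hθ2.ne'] at h
    nlinarith
  set k := ⌈q⌉₊ with hk
  have hqk : q ≤ (k : ℝ) := Nat.le_ceil q
  have hq0 : (0:ℝ) ≤ q := by linarith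
  set A' := (1 + κ * T) ^ q * (4 ^ q + 1) with hA'def
  set D := ((1 + κ * T) * θ ^ 2 / (κ * lam - θ ^ 2 / 4)) ^ k *
    ((2 * k).factorial * (2 * Real.exp 2⁻¹)) with hDdef
  have hT1 : (1:ℝ) ≤ 1 + κ * T := by nlinarith
  have h1q : (1:ℝ) ≤ (1 + κ * T) ^ q := Real.one_le_rpow hT1 hq0
  have h4q : (0:ℝ) ≤ (4:ℝ) ^ q := Real.rpow_nonneg (by norm_num) q
  have hA'1 : 1 ≤ A' := by rw [hA'def]; nlinarith
  have hA'0 : 0 ≤ A' := by linarith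
  have hD0 : 0 ≤ D := by
    rw [hDdef]
    have : (0:ℝ) ≤ ((1 + κ * T) * θ ^ 2 / (κ * lam - θ ^ 2 / 4)) ^ k := by positivity
    positivity
  refine ⟨A' + D, ?_⟩
  intro v₀ hv₀ N t ht s hs
  have hnN : nIdx t N s ≤ N := Nat.findGreatest_le N
  have hes : eta t N s ≤ s := by
    have h0 : t 0 ≤ s := by rw [ht.zero]; exact hs.1
    exact Nat.findGreatest_spec (P := fun n => t n ≤ s) (Nat.zero_le N) h0
  have he0 : (0:ℝ) ≤ eta t N s := by
    rw [← ht.zero]; exact ht.mono' 0 _ (Nat.zero_le _) hnN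
  have hΔT : s - eta t N s ≤ T := by have := hs.2; linarith
  have hvpos : ∀ ω, 0 < milstein κ lam θ v₀ t W (nIdx t N s) ω :=
    fun ω => milstein_pos hκ hc ht hv₀ ω _ hnN
  rcases eq_or_lt_of_le (sub_nonneg.mpr hes) with hΔ0 | hΔ
  · -- boundary case: s is a partition point
    have hse : eta t N s = s := by linarith
    have hint : ∀ ω, (milstein κ lam θ v₀ t W (nIdx t N s) ω / hatV κ lam θ v₀ t N W s ω) ^ q
        = 1 := by
      intro ω
      have h1 : hatV κ lam θ v₀ t N W s ω = milstein κ lam θ v₀ t W (nIdx t N s) ω := by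
        simp [hatV, tildeV, hse, sub_self]
      rw [h1, div_self (hvpos ω).ne', Real.one_rpow]
    simp only [hint]
    calc ∫⁻ _ω, ENNReal.ofReal (1:ℝ) ∂P = 1 := by simp
      _ ≤ ENNReal.ofReal (A' + D) := by
          rw [← ENNReal.ofReal_one]
          exact ENNReal.ofReal_le_ofReal (by linarith)
  · -- main case
    have hΔ' : (0:ℝ) < s - eta t N s := hΔ
    set Δ := s - eta t N s with hΔdef
    set c := κ * lam - θ ^ 2 / 4 with hcdef
    set b'' := ((1 + κ * T) * θ ^ 2 / (c * Δ)) ^ k with hbdef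
    have hb0 : 0 ≤ b'' := by rw [hbdef]; positivity
    set E := b'' * ((2 * k).factorial * Δ ^ k) with hEdef
    have hE0 : 0 ≤ E := by rw [hEdef]; positivity
    set a := (Real.sqrt Δ)⁻¹ with hadef
    have hpt : ∀ ω, ENNReal.ofReal
        ((milstein κ lam θ v₀ t W (nIdx t N s) ω / hatV κ lam θ v₀ t N W s ω) ^ q)
        ≤ ENNReal.ofReal A' + ENNReal.ofReal E *
          (ENNReal.ofReal (Real.exp (a * (W s ω - W (eta t N s) ω)))
            + ENNReal.ofReal (Real.exp (-a * (W s ω - W (eta t N s) ω)))) := by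
      intro ω
      have hv : 0 < milstein κ lam θ v₀ t W (nIdx t N s) ω := hvpos ω
      have htld : tildeV κ lam θ v₀ t N W s ω
          = (Real.sqrt (milstein κ lam θ v₀ t W (nIdx t N s) ω)
              + (θ / 2) * (W s ω - W (eta t N s) ω)) ^ 2 + c * Δ := by
        simp only [tildeV, hcdef, ← hΔdef]
        linear_combination - Real.sq_sqrt hv.le
      have hratio : milstein κ lam θ v₀ t W (nIdx t N s) ω / hatV κ lam θ v₀ t N W s ω
          = milstein κ lam θ v₀ t W (nIdx t N s) ω * (1 + κ * Δ) /
            ((Real.sqrt (milstein κ lam θ v₀ t W (nIdx t N s) ω)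
              + (θ / 2) * (W s ω - W (eta t N s) ω)) ^ 2 + c * Δ) := by
        rw [hatV, div_div_eq_mul_div, htld, ← hΔdef]
      have hreal1 := ratio_rpow_bound hκ hθ hT hq hc k hqk
        (w := W s ω - W (eta t N s) ω) hv hΔ' hΔT
      have hexp1 := pow_le_exp_aux k hΔ' (W s ω - W (eta t N s) ω)
      have hreal : (milstein κ lam θ v₀ t W (nIdx t N s) ω / hatV κ lam θ v₀ t N W s ω) ^ q
          ≤ A' + E * (Real.exp (a * (W s ω - W (eta t N s) ω))
              + Real.exp (-a * (W s ω - W (eta t N s) ω))) := by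
        rw [hratio]
        have h2 : b'' * (W s ω - W (eta t N s) ω) ^ (2 * k)
            ≤ b'' * ((2 * k).factorial * Δ ^ k *
              (Real.exp (a * (W s ω - W (eta t N s) ω))
                + Real.exp (-(a * (W s ω - W (eta t N s) ω))))) :=
          mul_le_mul_of_nonneg_left hexp1 hb0
        have h3 : b'' * ((2 * k).factorial * Δ ^ k *
              (Real.exp (a * (W s ω - W (eta t N s) ω))
                + Real.exp (-(a * (W s ω - W (eta t N s) ω)))))
            = E * (Real.exp (a * (W s ω - W (eta t N s) ω))
              + Real.exp (-a * (W s ω - W (eta t N s) ω))) := by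
          rw [hEdef, neg_mul]; ring
        calc (milstein κ lam θ v₀ t W (nIdx t N s) ω * (1 + κ * Δ) /
            ((Real.sqrt (milstein κ lam θ v₀ t W (nIdx t N s) ω)
              + (θ / 2) * (W s ω - W (eta t N s) ω)) ^ 2 + c * Δ)) ^ q
            ≤ A' + b'' * (W s ω - W (eta t N s) ω) ^ (2 * k) := hreal1
          _ ≤ A' + E * (Real.exp (a * (W s ω - W (eta t N s) ω))
              + Real.exp (-a * (W s ω - W (eta t N s) ω))) := by
              rw [← h3]; linarith
      have hS0 : 0 ≤ Real.exp (a * (W s ω - W (eta t N s) ω))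
          + Real.exp (-a * (W s ω - W (eta t N s) ω)) := by positivity
      refine le_trans (ENNReal.ofReal_le_ofReal hreal) (le_of_eq ?_)
      rw [ENNReal.ofReal_add hA'0 (mul_nonneg hE0 hS0), ENNReal.ofReal_mul hE0,
        ENNReal.ofReal_add (Real.exp_pos _).le (Real.exp_pos _).le]
    have hmeas1 : ∀ b : ℝ, Measurable fun ω =>
        ENNReal.ofReal (Real.exp (b * (W s ω - W (eta t N s) ω))) := by
      intro b
      exact ENNReal.measurable_ofReal.comp (Real.measurable_exp.comp
        (measurable_const.mul ((hW.meas s).sub (hW.meas (eta t N s)))))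
    have hexpint : ∀ b : ℝ, b ^ 2 = Δ⁻¹ →
        ∫⁻ ω, ENNReal.ofReal (Real.exp (b * (W s ω - W (eta t N s) ω))) ∂P
          = ENNReal.ofReal (Real.exp 2⁻¹) := by
      intro b hb
      have hmeasf : Measurable fun x : ℝ => ENNReal.ofReal (Real.exp (b * x)) := by fun_prop
      have hmeasW : Measurable fun ω => W s ω - W (eta t N s) ω :=
        (hW.meas s).sub (hW.meas (eta t N s))
      have hnn : (s - eta t N s).toNNReal ≠ 0 := (Real.toNNReal_pos.mpr hΔ').ne'
      calc ∫⁻ ω, ENNReal.ofReal (Real.exp (b * (W s ω - W (eta t N s) ω))) ∂P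
          = ∫⁻ x, ENNReal.ofReal (Real.exp (b * x))
              ∂(Measure.map (fun ω => W s ω - W (eta t N s) ω) P) :=
            (lintegral_map hmeasf hmeasW).symm
        _ = ∫⁻ x, ENNReal.ofReal (Real.exp (b * x))
              ∂(gaussianReal 0 (s - eta t N s).toNNReal) := by
            rw [hW.gauss (eta t N s) s he0 hes]
        _ = ENNReal.ofReal (Real.exp (b ^ 2 * ((s - eta t N s).toNNReal : ℝ) / 2)) :=
            lintegral_exp_gaussianReal b hnn
        _ = ENNReal.ofReal (Real.exp 2⁻¹) := by
            have hcoe : ((s - eta t N s).toNNReal : ℝ) = Δ :=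
              Real.coe_toNNReal _ (le_of_lt hΔ')
            rw [hcoe, hb, inv_mul_cancel₀ hΔ'.ne']
            norm_num
    have ha2 : a ^ 2 = Δ⁻¹ := by rw [hadef, inv_pow, Real.sq_sqrt hΔ'.le]
    have hna2 : (-a) ^ 2 = Δ⁻¹ := by rw [neg_sq]; exact ha2
    calc ∫⁻ ω, ENNReal.ofReal
          ((milstein κ lam θ v₀ t W (nIdx t N s) ω / hatV κ lam θ v₀ t N W s ω) ^ q) ∂P
        ≤ ∫⁻ ω, (ENNReal.ofReal A' + ENNReal.ofReal E *
            (ENNReal.ofReal (Real.exp (a * (W s ω - W (eta t N s) ω)))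
              + ENNReal.ofReal (Real.exp (-a * (W s ω - W (eta t N s) ω))))) ∂P :=
          lintegral_mono hpt
      _ = ENNReal.ofReal A' + ENNReal.ofReal E *
            ((∫⁻ ω, ENNReal.ofReal (Real.exp (a * (W s ω - W (eta t N s) ω))) ∂P)
              + ∫⁻ ω, ENNReal.ofReal (Real.exp (-a * (W s ω - W (eta t N s) ω))) ∂P) := by
          rw [lintegral_add_left measurable_const, lintegral_const, measure_univ, mul_one,
            lintegral_const_mul' _ _ ENNReal.ofReal_ne_top, lintegral_add_left (hmeas1 a)]
      _ = ENNReal.ofReal A' + ENNReal.ofReal E *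
            (ENNReal.ofReal (Real.exp 2⁻¹) + ENNReal.ofReal (Real.exp 2⁻¹)) := by
          rw [hexpint a ha2, hexpint (-a) hna2]
      _ ≤ ENNReal.ofReal (A' + D) := by
          rw [← ENNReal.ofReal_add (Real.exp_pos _).le (Real.exp_pos _).le,
            ← ENNReal.ofReal_mul hE0, ← ENNReal.ofReal_add hA'0 (mul_nonneg hE0 (by positivity))]
          apply ENNReal.ofReal_le_ofReal
          have hkey : b'' * Δ ^ k = ((1 + κ * T) * θ ^ 2 / c) ^ k := by
            rw [hbdef, ← mul_pow]
            congr 1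
            field_simp
          have h5 : E * (Real.exp 2⁻¹ + Real.exp 2⁻¹)
              = (b'' * Δ ^ k) * ((2 * k).factorial * (2 * Real.exp 2⁻¹)) := by
            rw [hEdef]; ring
          rw [h5, hkey, hDdef, hcdef]

end
end

section
/- Assume 4κλ ≥ θ². Then, almost surely, the drift-implicit Milstein scheme dominates the drift-implicit square-root Euler scheme: v_k ≥ a_k for all k = 0, 1, …, N. -/
open MeasureTheory ProbabilityTheory
open scoped ENNReal NNReal

noncomputable section

variable {Ω : Type*} [MeasurableSpace Ω]

/-- Drift-implicit square-root Euler scheme `a_k` for the CIR process. -/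
def sqrtEuler (κ lam θ v₀ : ℝ) (t : ℕ → ℝ) (W : ℝ → Ω → ℝ) : ℕ → Ω → ℝ
  | 0 => fun _ => v₀
  | k + 1 => fun ω =>
      ((Real.sqrt (sqrtEuler κ lam θ v₀ t W k ω)
            + (θ / 2) * (W (t (k + 1)) ω - W (t k) ω)) / (2 + κ * (t (k + 1) - t k))
        + Real.sqrt
            ((Real.sqrt (sqrtEuler κ lam θ v₀ t W k ω)
                + (θ / 2) * (W (t (k + 1)) ω - W (t k) ω)) ^ 2
                / (2 + κ * (t (k + 1) - t k)) ^ 2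
              + (κ * lam - θ ^ 2 / 4) * (t (k + 1) - t k)
                / (2 + κ * (t (k + 1) - t k)))) ^ 2


/-- Pathwise key inequality: one step of the square-root Euler scheme is dominated by
one step of the Milstein scheme. -/
lemma sqrtEuler_step_le (κ h d b c : ℝ) (hκ : 0 < κ) (hh : 0 < h) (hd : 0 ≤ d)
    (hbc : b ≤ c) :
    (b / (2 + κ * h) + Real.sqrt (b ^ 2 / (2 + κ * h) ^ 2 + d / (2 + κ * h))) ^ 2
      ≤ (1 / (1 + κ * h)) * (c ^ 2 + d) := by
  have hκh : 0 < κ * h := mul_pos hκ hh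
  have hm : (0:ℝ) < 2 + κ * h := by linarith
  have h1 : (0:ℝ) < 1 + κ * h := by linarith
  set u := b / (2 + κ * h) with hu
  set s := Real.sqrt (b ^ 2 / (2 + κ * h) ^ 2 + d / (2 + κ * h)) with hs
  have harg : 0 ≤ b ^ 2 / (2 + κ * h) ^ 2 + d / (2 + κ * h) := by positivity
  have hs0 : 0 ≤ s := Real.sqrt_nonneg _
  have hs2 : s ^ 2 = b ^ 2 / (2 + κ * h) ^ 2 + d / (2 + κ * h) := Real.sq_sqrt harg
  have hub : u * (2 + κ * h) = b := div_mul_cancel₀ b hm.ne'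
  have e2 : s ^ 2 * (2 + κ * h) = u ^ 2 * (2 + κ * h) + d := by
    rw [hs2, hu]
    field_simp
  -- r := u + s is nonnegative
  have hr0 : 0 ≤ u + s := by
    have h1' : b ^ 2 / (2 + κ * h) ^ 2 ≤ b ^ 2 / (2 + κ * h) ^ 2 + d / (2 + κ * h) := by
      have : 0 ≤ d / (2 + κ * h) := by positivity
      linarith
    have h2' : Real.sqrt (b ^ 2 / (2 + κ * h) ^ 2) ≤ s := Real.sqrt_le_sqrt h1'
    have h3' : Real.sqrt (b ^ 2 / (2 + κ * h) ^ 2) = |u| := by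
      rw [show b ^ 2 / (2 + κ * h) ^ 2 = u ^ 2 from (div_pow b _ 2).symm,
        Real.sqrt_sq_eq_abs]
    have := neg_abs_le u
    rw [h3'] at h2'
    linarith
  have h2rc : 2 * (u + s) * b ≤ 2 * (u + s) * c :=
    mul_le_mul_of_nonneg_left hbc (by linarith : (0:ℝ) ≤ 2 * (u + s))
  have hsq : 0 ≤ (u + s - c) ^ 2 := sq_nonneg _
  rw [div_mul_eq_mul_div, one_mul, le_div_iff₀ h1]
  nlinarith [e2, hub, h2rc, hsq]

/-- if `4κλ ≥ θ²` then, almost surely, the drift-implicit Milstein scheme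
dominates the drift-implicit square-root Euler scheme: `v_k ≥ a_k` for all `k = 0, …, N`. -/
theorem statement9
    {Ω : Type*} [MeasurableSpace Ω] (P : Measure Ω) [IsProbabilityMeasure P]
    (W : ℝ → Ω → ℝ) (hW : IsBrownian P W)
    (κ lam θ v₀ T : ℝ)
    (hκ : 0 < κ) (hlam : 0 < lam) (hθ : 0 < θ) (hv₀ : 0 < v₀) (hT : 0 < T)
    (hF : θ ^ 2 ≤ 4 * κ * lam) :
    ∀ (N : ℕ) (t : ℕ → ℝ), IsPartition t N T →
      ∀ᵐ ω ∂P, ∀ k ≤ N, sqrtEuler κ lam θ v₀ t W k ω ≤ milstein κ lam θ v₀ t W k ω := by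
  intro N t hpart
  filter_upwards with ω
  intro k hk
  induction k with
  | zero => simp [sqrtEuler, milstein]
  | succ n ih =>
    have hn : n < N := Nat.lt_of_succ_le hk
    have ihn : sqrtEuler κ lam θ v₀ t W n ω ≤ milstein κ lam θ v₀ t W n ω :=
      ih (Nat.le_of_lt hn)
    have hh : 0 < t (n + 1) - t n := sub_pos.mpr (hpart.lt n hn)
    have hd : 0 ≤ (κ * lam - θ ^ 2 / 4) * (t (n + 1) - t n) := by
      apply mul_nonneg _ (le_of_lt hh)
      nlinarith
    have hbc : Real.sqrt (sqrtEuler κ lam θ v₀ t W n ω)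
          + (θ / 2) * (W (t (n + 1)) ω - W (t n) ω)
        ≤ Real.sqrt (milstein κ lam θ v₀ t W n ω)
          + (θ / 2) * (W (t (n + 1)) ω - W (t n) ω) := by
      have := Real.sqrt_le_sqrt ihn
      linarith
    have key := sqrtEuler_step_le κ (t (n + 1) - t n)
      ((κ * lam - θ ^ 2 / 4) * (t (n + 1) - t n))
      (Real.sqrt (sqrtEuler κ lam θ v₀ t W n ω)
        + (θ / 2) * (W (t (n + 1)) ω - W (t n) ω))
      (Real.sqrt (milstein κ lam θ v₀ t W n ω)
        + (θ / 2) * (W (t (n + 1)) ω - W (t n) ω))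
      hκ hh hd hbc
    simpa [sqrtEuler, milstein, mul_comm, mul_left_comm, mul_assoc, div_div] using key


end
end

section
/- Assume ν = 2κλ/θ² > 1/2. For every p ≥ 1 there exists a constant C depending only on p, κ, λ, θ, v₀, T (independent of the partition) such that for every partition 0 = t₀ < ⋯ < t_N = T one has E[ max_{0≤k≤N} a_k^p ] ≤ C. -/
set_option maxHeartbeats 2000000
set_option linter.unusedSectionVars false
set_option linter.unusedVariables false
set_option linter.unusedTactic false
set_option linter.deprecated false


open MeasureTheory ProbabilityTheory
open scoped ENNReal NNReal

noncomputable section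

variable {Ω : Type*} [MeasurableSpace Ω]

noncomputable section Aux

open Real

variable {Ω : Type*} [MeasurableSpace Ω]

lemma aux_one_div_sqrt_le_exp {u : ℝ} (hu0 : 0 ≤ u) (hu : u ≤ 1 / 2) :
    (Real.sqrt (1 - u))⁻¹ ≤ Real.exp u := by
  have hu1 : (0:ℝ) < 1 - u := by linarith
  rw [inv_le_iff_one_le_mul₀ (Real.sqrt_pos.mpr hu1)]
  have h1 : Real.exp (-(2*u)) ≤ 1 - u := by
    have h2 : 2*u + 1 ≤ Real.exp (2*u) := Real.add_one_le_exp (2*u)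
    have h3 : Real.exp (-(2*u)) = (Real.exp (2*u))⁻¹ := by rw [Real.exp_neg]
    rw [h3, inv_le_iff_one_le_mul₀ (Real.exp_pos _)]
    nlinarith [Real.exp_pos (2*u)]
  have key : 1 ≤ (Real.exp u * Real.sqrt (1 - u))^2 := by
    have e1 : (Real.exp u * Real.sqrt (1 - u))^2 = Real.exp (2*u) * (1 - u) := by
      rw [mul_pow, Real.sq_sqrt hu1.le, sq, ← Real.exp_add]
      ring_nf
    rw [e1]
    calc (1:ℝ) = Real.exp (2*u) * Real.exp (-(2*u)) := by
            rw [← Real.exp_add]; norm_num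
      _ ≤ Real.exp (2*u) * (1 - u) :=
            mul_le_mul_of_nonneg_left h1 (Real.exp_pos _).le
  nlinarith [mul_pos (Real.exp_pos u) (Real.sqrt_pos.mpr hu1), Real.exp_pos u,
    Real.sqrt_pos.mpr hu1]

lemma aux_gauss_mgf_bound {c s h m : ℝ} (hc : 0 < c) (hh : 0 < h)
    (hu : 2 * c * s ^ 2 * h ≤ 1 / 2) :
    ∫⁻ y, ENNReal.ofReal (Real.exp (c * (m + s * y) ^ 2)) ∂(gaussianReal 0 h.toNNReal)
      ≤ ENNReal.ofReal
        (Real.exp (c / (1 - 2 * c * s ^ 2 * h) * m ^ 2 + 2 * c * s ^ 2 * h)) := by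
  have hu0 : 0 ≤ 2 * c * s ^ 2 * h := by positivity
  have hu1 : (0:ℝ) < 1 - 2 * c * s ^ 2 * h := by linarith
  have hv : (h.toNNReal : ℝ≥0) ≠ 0 := by
    simp [Real.toNNReal_eq_zero, not_le, hh]
  have hvr : ((h.toNNReal : ℝ≥0) : ℝ) = h := Real.coe_toNNReal h hh.le
  set β : ℝ := (1 - 2 * c * s ^ 2 * h) / (2 * h) with hβ_def
  have hβ : 0 < β := by positivity
  set δ : ℝ := c * m * s / β with hδ_def
  set R : ℝ := c / (1 - 2 * c * s ^ 2 * h) * m ^ 2 with hR_def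
  rw [gaussianReal_of_var_ne_zero 0 hv,
    lintegral_withDensity_eq_lintegral_mul _ (measurable_gaussianPDF _ _)
      (by fun_prop)]
  have hexp_id : ∀ y : ℝ, - (y - 0) ^ 2 / (2 * ((h.toNNReal : ℝ≥0) : ℝ))
      + c * (m + s * y) ^ 2 = R + (-β * (y - δ) ^ 2) := by
    intro y
    have h2 : (2 : ℝ) * h ≠ 0 := by positivity
    have h1u : (1 : ℝ) - 2 * c * s ^ 2 * h ≠ 0 := ne_of_gt hu1
    have hβ' : β ≠ 0 := ne_of_gt hβ
    rw [hvr, hR_def, hδ_def, hβ_def]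
    generalize hU : (1 : ℝ) - 2 * c * s ^ 2 * h = U at h1u ⊢
    field_simp
    linear_combination (-(y ^ 2 * U + 2 * h * c * m ^ 2)) * hU
  have hpdf : ∀ y : ℝ, (gaussianPDF 0 h.toNNReal * fun y =>
      ENNReal.ofReal (Real.exp (c * (m + s * y) ^ 2))) y
      = ENNReal.ofReal ((Real.sqrt (2 * π * h))⁻¹ * Real.exp R *
          Real.exp (-β * (y - δ) ^ 2)) := by
    intro y
    simp only [Pi.mul_apply, gaussianPDF, gaussianPDFReal]
    rw [← ENNReal.ofReal_mul (by positivity)]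
    congr 1
    rw [mul_assoc, ← Real.exp_add, hexp_id y, Real.exp_add, hvr, ← mul_assoc]
  simp only [hpdf]
  have hint : Integrable (fun y : ℝ =>
      (Real.sqrt (2 * π * h))⁻¹ * Real.exp R * Real.exp (-β * (y - δ) ^ 2)) := by
    exact ((integrable_exp_neg_mul_sq hβ).comp_sub_right δ).const_mul _
  rw [← ofReal_integral_eq_lintegral_ofReal hint
    (Filter.Eventually.of_forall fun y => by positivity)]
  apply ENNReal.ofReal_le_ofReal
  rw [integral_const_mul]
  have hI : ∫ y : ℝ, Real.exp (-β * (y - δ) ^ 2) = Real.sqrt (π / β) := by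
    rw [integral_sub_right_eq_self (fun y => Real.exp (-β * y ^ 2)) δ]
    exact integral_gaussian β
  rw [hI]
  have hfac : (Real.sqrt (2 * π * h))⁻¹ * Real.sqrt (π / β)
      = (Real.sqrt (1 - 2 * c * s ^ 2 * h))⁻¹ := by
    rw [← Real.sqrt_inv, ← Real.sqrt_mul (by positivity)]
    rw [hβ_def, ← Real.sqrt_inv]
    congr 1
    have h1u : (1 : ℝ) - 2 * c * s ^ 2 * h ≠ 0 := ne_of_gt hu1
    field_simp
  calc (Real.sqrt (2 * π * h))⁻¹ * Real.exp R * Real.sqrt (π / β)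
      = (Real.sqrt (2 * π * h))⁻¹ * Real.sqrt (π / β) * Real.exp R := by ring
    _ = (Real.sqrt (1 - 2 * c * s ^ 2 * h))⁻¹ * Real.exp R := by rw [hfac]
    _ ≤ Real.exp (2 * c * s ^ 2 * h) * Real.exp R :=
        mul_le_mul_of_nonneg_right (aux_one_div_sqrt_le_exp hu0 hu) (Real.exp_pos _).le
    _ = Real.exp (R + 2 * c * s ^ 2 * h) := by rw [← Real.exp_add]; ring_nf

/-- Abstract one-step map of the scheme. -/
def euStep (κ lam θ : ℝ) (h a w : ℝ) : ℝ :=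
  ((Real.sqrt a + (θ / 2) * w) / (2 + κ * h)
    + Real.sqrt ((Real.sqrt a + (θ / 2) * w) ^ 2 / (2 + κ * h) ^ 2
        + (κ * lam - θ ^ 2 / 4) * h / (2 + κ * h))) ^ 2

lemma sqrtEuler_succ (κ lam θ v₀ : ℝ) (t : ℕ → ℝ) (W : ℝ → Ω → ℝ) (k : ℕ) (ω : Ω) :
    sqrtEuler κ lam θ v₀ t W (k + 1) ω
      = euStep κ lam θ (t (k + 1) - t k) (sqrtEuler κ lam θ v₀ t W k ω)
          (W (t (k + 1)) ω - W (t k) ω) := rfl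

lemma euStep_nonneg (κ lam θ h a w : ℝ) : 0 ≤ euStep κ lam θ h a w := sq_nonneg _

lemma measurable_euStep (κ lam θ h : ℝ) :
    Measurable (fun q : ℝ × ℝ => euStep κ lam θ h q.1 q.2) := by
  unfold euStep
  fun_prop

lemma euStep_le (κ lam θ : ℝ) {h : ℝ} (hκ : 0 ≤ κ) (hFel : θ ^ 2 / 4 ≤ κ * lam)
    (hh : 0 ≤ h) (a w : ℝ) :
    euStep κ lam θ h a w ≤ (Real.sqrt a + (θ / 2) * w) ^ 2 + κ * lam * h := by
  set x : ℝ := Real.sqrt a + (θ / 2) * w with hx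
  set c : ℝ := κ * lam - θ ^ 2 / 4 with hc
  have hc0 : 0 ≤ c := by simp [hc]; linarith
  set d : ℝ := 2 + κ * h with hd
  have hd2 : (2:ℝ) ≤ d := by simp [hd]; positivity
  have hd0 : d ≠ 0 := by intro h0; rw [h0] at hd2; norm_num at hd2
  have hD : 0 ≤ x ^ 2 / d ^ 2 + c * h / d := by positivity
  set s : ℝ := Real.sqrt (x ^ 2 / d ^ 2 + c * h / d) with hs
  have hs0 : 0 ≤ s := Real.sqrt_nonneg _
  have hs2 : s ^ 2 = x ^ 2 / d ^ 2 + c * h / d := Real.sq_sqrt hD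
  have hs2' : d ^ 2 * s ^ 2 = x ^ 2 + c * h * d := by
    apply mul_left_cancel₀ hd0
    field_simp at hs2
    linear_combination d * hs2
  set y : ℝ := x / d + s with hy
  have hstep : euStep κ lam θ h a w = y ^ 2 := rfl
  have key : d * y ^ 2 = 2 * x * y + c * h := by
    rw [hy]
    field_simp
    nlinarith [hs2']
  have hy2 : 0 ≤ y ^ 2 := sq_nonneg y
  have hch : c * h ≤ κ * lam * h := by
    apply mul_le_mul_of_nonneg_right _ hh
    simp [hc]; positivity
  rw [hstep]
  nlinarith [sq_nonneg (x - y), key, hy2, hch]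

/-- The scheme as a function of the first `n` Brownian increments. -/
def phiE (κ lam θ v₀ : ℝ) (t : ℕ → ℝ) : (n : ℕ) → (Fin n → ℝ) → ℝ
  | 0 => fun _ => v₀
  | n + 1 => fun v =>
      euStep κ lam θ (t (n + 1) - t n)
        (phiE κ lam θ v₀ t n (fun i => v i.castSucc)) (v (Fin.last n))

lemma measurable_phiE (κ lam θ v₀ : ℝ) (t : ℕ → ℝ) (n : ℕ) :
    Measurable (phiE κ lam θ v₀ t n) := by
  induction n with
  | zero => exact measurable_const
  | succ n ih =>
      have h1 : Measurable fun v : Fin (n+1) → ℝ =>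
          phiE κ lam θ v₀ t n (fun i => v i.castSucc) :=
        ih.comp (measurable_pi_lambda _ fun i => measurable_pi_apply _)
      show Measurable fun v : Fin (n+1) → ℝ =>
        euStep κ lam θ (t (n + 1) - t n) (phiE κ lam θ v₀ t n (fun i => v i.castSucc))
          (v (Fin.last n))
      unfold euStep
      fun_prop

lemma phiE_nonneg (κ lam θ : ℝ) {v₀ : ℝ} (hv₀ : 0 ≤ v₀) (t : ℕ → ℝ) (n : ℕ)
    (v : Fin n → ℝ) : 0 ≤ phiE κ lam θ v₀ t n v := by
  cases n with
  | zero => exact hv₀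
  | succ n => exact euStep_nonneg _ _ _ _ _ _

lemma sqrtEuler_nonneg (κ lam θ : ℝ) {v₀ : ℝ} (hv₀ : 0 ≤ v₀) (t : ℕ → ℝ)
    (W : ℝ → Ω → ℝ) (k : ℕ) (ω : Ω) : 0 ≤ sqrtEuler κ lam θ v₀ t W k ω := by
  cases k with
  | zero => exact hv₀
  | succ k => exact euStep_nonneg _ _ _ _ _ _

lemma measurable_sqrtEuler (κ lam θ v₀ : ℝ) (t : ℕ → ℝ) (W : ℝ → Ω → ℝ)
    (hW : ∀ s, Measurable (W s)) (k : ℕ) :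
    Measurable (sqrtEuler κ lam θ v₀ t W k) := by
  induction k with
  | zero => exact measurable_const
  | succ k ih =>
      show Measurable fun ω =>
        euStep κ lam θ (t (k + 1) - t k) (sqrtEuler κ lam θ v₀ t W k ω)
          (W (t (k + 1)) ω - W (t k) ω)
      unfold euStep
      have h1 := hW (t (k+1))
      have h2 := hW (t k)
      fun_prop

lemma sqrtEuler_eq_phiE (κ lam θ v₀ : ℝ) (t : ℕ → ℝ) (W : ℝ → Ω → ℝ) (ω : Ω)
    (k : ℕ) (f : ℕ → ℝ) (hf : ∀ i < k, f i = W (t (i + 1)) ω - W (t i) ω) :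
    sqrtEuler κ lam θ v₀ t W k ω = phiE κ lam θ v₀ t k (fun i : Fin k => f i) := by
  induction k with
  | zero => rfl
  | succ k ih =>
      rw [sqrtEuler_succ]
      show _ = euStep κ lam θ (t (k + 1) - t k)
        (phiE κ lam θ v₀ t k (fun i : Fin k => (fun j : Fin (k+1) => f j) i.castSucc))
        ((fun j : Fin (k+1) => f j) (Fin.last k))
      simp only [Fin.coe_castSucc, Fin.val_last]
      rw [ih (fun i hi => hf i (hi.trans (Nat.lt_succ_self k))), hf k (Nat.lt_succ_self k)]

/-- Fubini-type bound using independence of the history `X` and the new increment `Y`. -/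
lemma lintegral_indep_step (P : Measure Ω) [IsProbabilityMeasure P]
    {k : ℕ} {X : Ω → (Fin k → ℝ)} {Y : Ω → ℝ} (hX : Measurable X) (hY : Measurable Y)
    (hind : IndepFun X Y P)
    {F : (Fin k → ℝ) → ℝ → ℝ≥0∞} (hF : Measurable (fun q : (Fin k → ℝ) × ℝ => F q.1 q.2))
    {G : (Fin k → ℝ) → ℝ≥0∞} (hG : Measurable G)
    (hbound : ∀ v, ∫⁻ y, F v y ∂(Measure.map Y P) ≤ G v) :
    ∫⁻ ω, F (X ω) (Y ω) ∂P ≤ ∫⁻ ω, G (X ω) ∂P := by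
  have hmap := (indepFun_iff_map_prod_eq_prod_map_map hX.aemeasurable hY.aemeasurable).mp hind
  calc ∫⁻ ω, F (X ω) (Y ω) ∂P
      = ∫⁻ q, F q.1 q.2 ∂(P.map (fun ω => (X ω, Y ω))) :=
        (lintegral_map hF (hX.prodMk hY)).symm
    _ = ∫⁻ q, F q.1 q.2 ∂((P.map X).prod (P.map Y)) := by rw [hmap]
    _ = ∫⁻ v, ∫⁻ y, F v y ∂(P.map Y) ∂(P.map X) := by
        have h1 : IsProbabilityMeasure (P.map Y) := Measure.isProbabilityMeasure_map hY.aemeasurable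
        exact lintegral_prod _ hF.aemeasurable
    _ ≤ ∫⁻ v, G v ∂(P.map X) := lintegral_mono fun v => hbound v
    _ = ∫⁻ ω, G (X ω) ∂P := lintegral_map hG hX

lemma aux_div_id {q e : ℝ} (hq : q ≠ 0) (hqe : q - e ≠ 0) :
    (1 / q) / (1 - (1 / q) * e) = 1 / (q - e) := by
  rw [div_eq_div_iff]
  · field_simp
  · have : 1 - (1 / q) * e = (q - e) / q := by field_simp
    rw [this]
    exact div_ne_zero hqe hq
  · exact hqe

end Aux

/-- under `ν = 2κλ/θ² > 1/2`, for every `p ≥ 1` there is a constant `C`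
(independent of the partition) such that the drift-implicit square-root Euler scheme
satisfies `E[max_{0 ≤ k ≤ N} a_k^p] ≤ C`. -/
theorem statement10
    {Ω : Type*} [MeasurableSpace Ω] (P : Measure Ω) [IsProbabilityMeasure P]
    (W : ℝ → Ω → ℝ) (hW : IsBrownian P W)
    (κ lam θ v₀ T : ℝ)
    (hκ : 0 < κ) (hlam : 0 < lam) (hθ : 0 < θ) (hv₀ : 0 < v₀) (hT : 0 < T)
    (hFeller : 1 / 2 < 2 * κ * lam / θ ^ 2)
    (p : ℝ) (hp : 1 ≤ p) :
    ∃ C : ℝ, ∀ (N : ℕ) (t : ℕ → ℝ), IsPartition t N T →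
      ∫⁻ ω, ENNReal.ofReal (⨆ k ∈ Finset.range (N + 1), (sqrtEuler κ lam θ v₀ t W k ω) ^ p) ∂P
        ≤ ENNReal.ofReal C := by
  classical
  have hθ2 : (0:ℝ) < θ ^ 2 := by positivity
  have hFel : θ ^ 2 / 4 ≤ κ * lam := by
    rw [div_lt_div_iff₀ (by norm_num) hθ2] at hFeller
    nlinarith
  -- global constants
  set c₀ : ℝ := θ ^ 2 * T + 1 with hc₀_def
  have hc₀1 : (1:ℝ) ≤ c₀ := by nlinarith
  have hc₀0 : (0:ℝ) < c₀ := by linarith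
  set αmx : ℝ := 1 / c₀ with hαmx_def
  set αmn : ℝ := 1 / (c₀ + θ ^ 2 * T / 2) with hαmn_def
  have hαmx0 : 0 < αmx := by positivity
  have hαmn0 : 0 < αmn := by positivity
  have hαle : αmn ≤ αmx := by
    apply one_div_le_one_div_of_le hc₀0
    nlinarith
  set γ : ℝ := αmx * (κ * lam + θ ^ 2 / 2) with hγ_def
  have hγ0 : 0 ≤ γ := by positivity
  set Kc : ℝ := Real.exp (αmx * v₀ + γ * T) with hKc_def
  have hKc0 : 0 < Kc := Real.exp_pos _
  set cn : ℕ → ℝ := fun n => Kc * Real.exp (-αmn * n) * ((n:ℝ) + 1) ^ p with hcn_def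
  have hcn0 : ∀ n, 0 ≤ cn n := by
    intro n
    have : (0:ℝ) ≤ ((n:ℝ) + 1) ^ p := Real.rpow_nonneg (by positivity) _
    positivity
  have hsum : Summable cn := by
    set r : ℝ := Real.exp (-αmn) with hr_def
    have hr0 : 0 < r := Real.exp_pos _
    have hr1 : r < 1 := Real.exp_lt_one_iff.mpr (by linarith)
    set q : ℕ := ⌈p⌉₊ with hq_def
    have hbase : Summable (fun n : ℕ => (n:ℝ) ^ q * r ^ n) :=
      summable_pow_mul_geometric_of_norm_lt_one q (by rw [Real.norm_eq_abs, abs_of_pos hr0]; exact hr1)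
    have hshift : Summable (fun n : ℕ => ((n:ℝ) + 1) ^ q * r ^ (n + 1)) := by
      have := (summable_nat_add_iff (f := fun n : ℕ => (n:ℝ) ^ q * r ^ n) 1).mpr hbase
      refine this.congr fun n => by push_cast; ring
    have hshift' : Summable (fun n : ℕ => ((n:ℝ) + 1) ^ q * r ^ n) := by
      have := hshift.mul_left r⁻¹
      refine this.congr fun n => ?_
      field_simp
      ring
    apply Summable.of_nonneg_of_le hcn0 _ ((hshift'.mul_left Kc))
    intro n
    rw [hcn_def]
    simp only
    have h1 : Real.exp (-αmn * n) = r ^ n := by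
      rw [hr_def, ← Real.exp_nat_mul]
      congr 1
      ring
    rw [h1]
    have h2 : ((n:ℝ) + 1) ^ p ≤ ((n:ℝ) + 1) ^ (q:ℝ) := by
      apply Real.rpow_le_rpow_of_exponent_le (by push_cast; linarith [Nat.cast_nonneg (α := ℝ) n])
      exact Nat.le_ceil p
    rw [Real.rpow_natCast] at h2
    calc Kc * r ^ n * ((n:ℝ) + 1) ^ p ≤ Kc * r ^ n * ((n:ℝ) + 1) ^ q := by
          apply mul_le_mul_of_nonneg_left h2 (by positivity)
      _ = Kc * (((n:ℝ) + 1) ^ q * r ^ n) := by ring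
  refine ⟨∑' n, cn n, ?_⟩
  intro N t hpart
  -- partition facts
  have hmono : ∀ j ≤ N, ∀ i ≤ j, t i ≤ t j := by
    intro j
    induction j with
    | zero => intro _ i hi; simp [Nat.le_zero.mp hi]
    | succ j ih =>
        intro hj i hi
        rcases Nat.lt_succ_iff_lt_or_eq.mp (Nat.lt_succ_of_le hi) with h | h
        · exact (ih (by omega) i (by omega)).trans (hpart.lt j (by omega)).le
        · exact le_of_eq (by rw [h])
  have ht0 : ∀ k ≤ N, 0 ≤ t k := by
    intro k hk
    have := hmono k hk 0 (Nat.zero_le _)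
    rwa [hpart.zero] at this
  have htT : ∀ k ≤ N, t k ≤ T := by
    intro k hk
    have := hmono N le_rfl k hk
    rwa [hpart.last] at this
  have hhpos : ∀ k < N, 0 < t (k + 1) - t k := fun k hk => sub_pos.mpr (hpart.lt k hk)
  have hhT : ∀ k < N, t (k + 1) - t k ≤ T := by
    intro k hk
    have h1 := ht0 k hk.le
    have h2 := htT (k + 1) hk
    linarith
  -- increments
  set u : ℕ → ℝ := fun k => t (min k N) with hu_def
  have hu_mono : Monotone u := by
    intro i j hij
    exact hmono (min j N) (min_le_right _ _) (min i N) (by omega)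
  set ξ : ℕ → Ω → ℝ := fun i ω => W (u (i + 1)) ω - W (u i) ω with hξ_def
  have hξ_meas : ∀ i, Measurable (ξ i) := fun i => (hW.meas _).sub (hW.meas _)
  have hξ_eq : ∀ i < N, ∀ ω, ξ i ω = W (t (i + 1)) ω - W (t i) ω := by
    intro i hi ω
    rw [hξ_def]
    simp only
    rw [hu_def]
    simp only
    rw [Nat.min_eq_left (by omega), Nat.min_eq_left (by omega)]
  have hiIndep := hW.indep u hu_mono
  -- the abbreviations
  set a : ℕ → Ω → ℝ := sqrtEuler κ lam θ v₀ t W with ha_def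
  have ha_meas : ∀ k, Measurable (a k) := fun k =>
    measurable_sqrtEuler κ lam θ v₀ t W hW.meas k
  have ha_nonneg : ∀ k ω, 0 ≤ a k ω := fun k ω =>
    sqrtEuler_nonneg κ lam θ hv₀.le t W k ω
  set Hmap : (k : ℕ) → Ω → (Fin k → ℝ) := fun k ω i => ξ i ω with hHmap_def
  have hHmap_meas : ∀ k, Measurable (Hmap k) := fun k =>
    measurable_pi_lambda _ fun i => hξ_meas i
  have ha_eq : ∀ k ≤ N, ∀ ω, a k ω = phiE κ lam θ v₀ t k (Hmap k ω) := by
    intro k hk ω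
    exact sqrtEuler_eq_phiE κ lam θ v₀ t W ω k (fun i => ξ i ω)
      (fun i hi => hξ_eq i (by omega) ω)
  have hindep : ∀ k, IndepFun (Hmap k) (ξ k) P := by
    intro k
    have base := hiIndep.indepFun_finset (Finset.range k) {k}
      (by simp [Finset.disjoint_singleton_right]) hξ_meas
    have me₁ : Measurable (fun v : (↥(Finset.range k) → ℝ) =>
        (fun i : Fin k => v ⟨i.val, Finset.mem_range.mpr i.isLt⟩)) :=
      measurable_pi_lambda _ fun i => measurable_pi_apply _
    have me₂ : Measurable (fun v : (↥({k} : Finset ℕ) → ℝ) =>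
        v ⟨k, Finset.mem_singleton_self k⟩) := measurable_pi_apply _
    exact base.comp me₁ me₂
  have hlaw : ∀ k < N, Measure.map (ξ k) P
      = gaussianReal 0 (t (k + 1) - t k).toNNReal := by
    intro k hk
    have : ξ k = fun ω => W (t (k + 1)) ω - W (t k) ω := funext fun ω => hξ_eq k hk ω
    rw [this]
    exact hW.gauss (t k) (t (k + 1)) (ht0 k hk.le) (hpart.lt k hk).le
  -- the exponential coefficient
  set A : ℕ → ℝ := fun k => 1 / (c₀ + θ ^ 2 / 2 * t k) with hA_def
  have hden : ∀ k ≤ N, 0 < c₀ + θ ^ 2 / 2 * t k := by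
    intro k hk
    have h1 := ht0 k hk
    nlinarith
  have hA_pos : ∀ k ≤ N, 0 < A k := fun k hk => by
    rw [hA_def]; exact div_pos one_pos (hden k hk)
  have hA_le : ∀ k ≤ N, A k ≤ αmx := by
    intro k hk
    rw [hA_def, hαmx_def]
    apply one_div_le_one_div_of_le hc₀0
    have h1 := ht0 k hk
    nlinarith
  have hA_ge : ∀ k ≤ N, αmn ≤ A k := by
    intro k hk
    rw [hA_def, hαmn_def]
    apply one_div_le_one_div_of_le (hden k hk)
    have h1 := htT k hk
    nlinarith
  -- the one-step supermartingale-type estimate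
  have step : ∀ k, k < N → ∀ g : (Fin k → ℝ) → ℝ≥0∞, Measurable g →
      ∫⁻ ω, g (Hmap k ω) * ENNReal.ofReal (Real.exp (A (k + 1) * a (k + 1) ω)) ∂P
        ≤ ENNReal.ofReal (Real.exp (γ * (t (k + 1) - t k)))
          * ∫⁻ ω, g (Hmap k ω) * ENNReal.ofReal (Real.exp (A k * a k ω)) ∂P := by
    intro k hk g hg
    set h : ℝ := t (k + 1) - t k with hh_def
    have hh0 : 0 < h := hhpos k hk
    have hhTk : h ≤ T := hhT k hk
    set c : ℝ := A (k + 1) with hcA_def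
    have hc0 : 0 < c := hA_pos (k + 1) hk
    have hc_le : c ≤ αmx := hA_le (k + 1) hk
    have hcu : 2 * c * (θ / 2) ^ 2 * h ≤ 1 / 2 := by
      have h1 : 2 * c * (θ / 2) ^ 2 * h ≤ 2 * αmx * (θ / 2) ^ 2 * T := by
        apply mul_le_mul (by nlinarith) hhTk hh0.le (by positivity)
      have h2 : 2 * αmx * (θ / 2) ^ 2 * T ≤ 1 / 2 := by
        rw [hαmx_def]
        have e : 2 * (1 / c₀) * (θ / 2) ^ 2 * T = θ ^ 2 * T / (2 * c₀) := by
          field_simp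
        rw [e, div_le_div_iff₀ (by positivity) (by norm_num)]
        linarith [hc₀_def]
      linarith
    -- the telescoping identity for the coefficient
    have hu1 : (0:ℝ) < 1 - 2 * c * (θ / 2) ^ 2 * h := by linarith
    have hAid : c / (1 - 2 * c * (θ / 2) ^ 2 * h) = A k := by
      have hq1 : 0 < c₀ + θ ^ 2 / 2 * t (k + 1) := hden (k + 1) hk
      have hq0 : 0 < c₀ + θ ^ 2 / 2 * t k := hden k hk.le
      have hq0' : c₀ + θ ^ 2 / 2 * t k = (c₀ + θ ^ 2 / 2 * t (k + 1)) - θ ^ 2 * h / 2 := by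
        rw [hh_def]; ring
      rw [hcA_def, hA_def]
      simp only
      rw [show (2:ℝ) * (1 / (c₀ + θ ^ 2 / 2 * t (k + 1))) * (θ / 2) ^ 2 * h
          = (1 / (c₀ + θ ^ 2 / 2 * t (k + 1))) * (θ ^ 2 * h / 2) by ring]
      rw [aux_div_id hq1.ne' (by rw [← hq0']; exact hq0.ne'), ← hq0']
    -- abbreviations for the Fubini step
    set m2 : (Fin k → ℝ) → ℝ := fun v => phiE κ lam θ v₀ t k v with hm2_def
    have hm2nn : ∀ v, 0 ≤ m2 v := fun v => phiE_nonneg κ lam θ hv₀.le t k v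
    have hm2meas : Measurable m2 := measurable_phiE κ lam θ v₀ t k
    set F : (Fin k → ℝ) → ℝ → ℝ≥0∞ := fun v y => g v *
      ENNReal.ofReal (Real.exp (c * ((Real.sqrt (m2 v) + (θ / 2) * y) ^ 2 + κ * lam * h)))
      with hF_def
    set G : (Fin k → ℝ) → ℝ≥0∞ := fun v =>
      ENNReal.ofReal (Real.exp (γ * h)) * (g v * ENNReal.ofReal (Real.exp (A k * m2 v)))
      with hG_def
    have hFmeas : Measurable (fun q : (Fin k → ℝ) × ℝ => F q.1 q.2) := by
      apply Measurable.mul (hg.comp measurable_fst)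
      apply Measurable.ennreal_ofReal
      have : Measurable fun q : (Fin k → ℝ) × ℝ => m2 q.1 := hm2meas.comp measurable_fst
      fun_prop
    have hGmeas : Measurable G := by
      apply Measurable.const_mul
      exact hg.mul (((hm2meas.const_mul _).exp).ennreal_ofReal)
    -- pointwise bound of the integrand by F
    have hpoint : ∀ ω, g (Hmap k ω) * ENNReal.ofReal (Real.exp (c * a (k + 1) ω))
        ≤ F (Hmap k ω) (ξ k ω) := by
      intro ω
      apply mul_le_mul_right
      apply ENNReal.ofReal_le_ofReal
      apply Real.exp_le_exp.mpr
      apply mul_le_mul_of_nonneg_left _ hc0.le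
      have hb := euStep_le κ lam θ hκ.le hFel hh0.le (a k ω)
        (W (t (k + 1)) ω - W (t k) ω)
      have hstep : a (k + 1) ω = euStep κ lam θ h (a k ω)
          (W (t (k + 1)) ω - W (t k) ω) := by
        rw [ha_def, hh_def]
        exact sqrtEuler_succ κ lam θ v₀ t W k ω
      rw [hstep, hh_def]
      calc euStep κ lam θ (t (k + 1) - t k) (a k ω) (W (t (k + 1)) ω - W (t k) ω)
          ≤ (Real.sqrt (a k ω) + (θ / 2) * (W (t (k + 1)) ω - W (t k) ω)) ^ 2
            + κ * lam * (t (k + 1) - t k) := hb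
        _ = (Real.sqrt (m2 (Hmap k ω)) + (θ / 2) * ξ k ω) ^ 2
            + κ * lam * (t (k + 1) - t k) := by
              rw [hξ_eq k hk ω, ha_eq k hk.le ω]
    -- the gaussian bound
    have hbound : ∀ v, ∫⁻ y, F v y ∂(Measure.map (ξ k) P) ≤ G v := by
      intro v
      rw [hlaw k hk, hF_def]
      simp only
      rw [lintegral_const_mul _ (by
        have : Measurable fun y : ℝ => m2 v + 0 * y := by fun_prop
        fun_prop)]
      rw [hG_def]
      simp only
      rw [mul_left_comm]
      apply mul_le_mul_right
      have hsplit : ∀ y : ℝ, Real.exp (c * ((Real.sqrt (m2 v) + (θ / 2) * y) ^ 2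
          + κ * lam * h)) = Real.exp (c * κ * lam * h)
            * Real.exp (c * (Real.sqrt (m2 v) + (θ / 2) * y) ^ 2) := by
        intro y
        rw [← Real.exp_add]
        congr 1
        ring
      calc ∫⁻ y, ENNReal.ofReal (Real.exp (c * ((Real.sqrt (m2 v) + (θ / 2) * y) ^ 2
              + κ * lam * h))) ∂(gaussianReal 0 (t (k + 1) - t k).toNNReal)
          = ENNReal.ofReal (Real.exp (c * κ * lam * h)) *
            ∫⁻ y, ENNReal.ofReal (Real.exp (c * (Real.sqrt (m2 v) + (θ / 2) * y) ^ 2))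
              ∂(gaussianReal 0 (t (k + 1) - t k).toNNReal) := by
            rw [← lintegral_const_mul _ (by fun_prop)]
            congr 1
            funext y
            rw [hsplit y, ENNReal.ofReal_mul (Real.exp_pos _).le]
        _ ≤ ENNReal.ofReal (Real.exp (c * κ * lam * h)) *
            ENNReal.ofReal (Real.exp (c / (1 - 2 * c * (θ / 2) ^ 2 * h)
              * (Real.sqrt (m2 v)) ^ 2 + 2 * c * (θ / 2) ^ 2 * h)) := by
            apply mul_le_mul_right
            have := aux_gauss_mgf_bound (c := c) (s := θ / 2) (h := h)
              (m := Real.sqrt (m2 v)) hc0 hh0 hcu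
            rw [hh_def] at this ⊢
            exact this
        _ ≤ ENNReal.ofReal (Real.exp (γ * h))
            * ENNReal.ofReal (Real.exp (A k * m2 v)) := by
            rw [← ENNReal.ofReal_mul (Real.exp_pos _).le, ← Real.exp_add,
              ← ENNReal.ofReal_mul (Real.exp_pos _).le, ← Real.exp_add]
            apply ENNReal.ofReal_le_ofReal
            apply Real.exp_le_exp.mpr
            rw [hAid, Real.sq_sqrt (hm2nn v)]
            have hγh : c * κ * lam * h + 2 * c * (θ / 2) ^ 2 * h ≤ γ * h := by
              rw [hγ_def]
              have hmm : c * (κ * lam + θ ^ 2 / 2) * h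
                  ≤ αmx * (κ * lam + θ ^ 2 / 2) * h :=
                mul_le_mul_of_nonneg_right
                  (mul_le_mul_of_nonneg_right hc_le (by positivity)) hh0.le
              nlinarith [hmm]
            linarith
    -- put everything together
    calc ∫⁻ ω, g (Hmap k ω) * ENNReal.ofReal (Real.exp (c * a (k + 1) ω)) ∂P
        ≤ ∫⁻ ω, F (Hmap k ω) (ξ k ω) ∂P := lintegral_mono hpoint
      _ ≤ ∫⁻ ω, G (Hmap k ω) ∂P :=
          lintegral_indep_step P (hHmap_meas k) (hξ_meas k) (hindep k) hFmeas hGmeas hbound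
      _ = ENNReal.ofReal (Real.exp (γ * h)) * ∫⁻ ω, g (Hmap k ω)
            * ENNReal.ofReal (Real.exp (A k * a k ω)) ∂P := by
          rw [hG_def]
          simp only
          have hmeasI : Measurable fun ω =>
              g (Hmap k ω) * ENNReal.ofReal (Real.exp (A k * m2 (Hmap k ω))) := by
            apply Measurable.mul
            · exact hg.comp (hHmap_meas k)
            · exact (((hm2meas.comp (hHmap_meas k)).const_mul _).exp).ennreal_ofReal
          rw [lintegral_const_mul _ hmeasI]
          congr 1
          apply lintegral_congr
          intro ω
          rw [ha_eq k hk.le ω]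
  -- the maximal-inequality tail estimate
  have tail : ∀ x : ℝ, 0 ≤ x →
      P {ω | ∃ k, k ≤ N ∧ x ≤ a k ω} ≤ ENNReal.ofReal (Kc * Real.exp (-αmn * x)) := by
    intro x hx
    set Bs : ℕ → Set Ω := fun k => {ω | ∀ j, j < k → a j ω < x} with hBs_def
    set As : ℕ → Set Ω := fun k => Bs k ∩ {ω | x ≤ a k ω} with hAs_def
    have hBmeas : ∀ k, MeasurableSet (Bs k) := by
      intro k
      have he : Bs k = ⋂ (j : ℕ) (_ : j < k), {ω | a j ω < x} := by
        ext ω; simp [hBs_def]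
      rw [he]
      exact MeasurableSet.iInter fun j => MeasurableSet.iInter fun _ =>
        measurableSet_lt (ha_meas j) measurable_const
    have hAmeas : ∀ k, MeasurableSet (As k) := fun k =>
      (hBmeas k).inter (measurableSet_le measurable_const (ha_meas k))
    set J : ℕ → ℝ≥0∞ :=
      fun k => ∫⁻ ω in Bs k, ENNReal.ofReal (Real.exp (A k * a k ω)) ∂P with hJ_def
    set D : ℕ → ℝ≥0∞ :=
      fun k => ENNReal.ofReal (Real.exp (-(γ * t k))) * J k with hD_def
    set cx : ℝ≥0∞ := ENNReal.ofReal (Real.exp (αmn * x - γ * T)) with hcx_def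
    have hunion : ∀ k, Bs (k + 1) ∪ As k = Bs k := by
      intro k
      ext ω
      simp only [hBs_def, hAs_def, Set.mem_union, Set.mem_inter_iff, Set.mem_setOf_eq]
      constructor
      · rintro (h1 | ⟨h1, _⟩)
        · exact fun j hj => h1 j (by omega)
        · exact h1
      · intro h1
        by_cases h2 : x ≤ a k ω
        · exact Or.inr ⟨h1, h2⟩
        · refine Or.inl fun j hj => ?_
          rcases Nat.lt_succ_iff_lt_or_eq.mp hj with h | h
          · exact h1 j h
          · rw [h]; exact lt_of_not_ge h2
    have hdisj : ∀ k, Disjoint (Bs (k + 1)) (As k) := by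
      intro k
      rw [Set.disjoint_left]
      intro ω h1 h2
      simp only [hBs_def, Set.mem_setOf_eq] at h1
      simp only [hAs_def, Set.mem_inter_iff, Set.mem_setOf_eq] at h2
      exact absurd (h1 k (Nat.lt_succ_self k)) (not_lt.mpr h2.2)
    -- lower bound for the last-hitting piece
    have hAsJ : ∀ k, k ≤ N →
        ENNReal.ofReal (Real.exp (αmn * x)) * P (As k)
          ≤ ∫⁻ ω in As k, ENNReal.ofReal (Real.exp (A k * a k ω)) ∂P := by
      intro k hk
      rw [← setLIntegral_const (As k) (ENNReal.ofReal (Real.exp (αmn * x)))]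
      apply setLIntegral_mono ((((ha_meas k).const_mul _).exp).ennreal_ofReal)
      intro ω hω
      simp only [hAs_def, Set.mem_inter_iff, Set.mem_setOf_eq] at hω
      apply ENNReal.ofReal_le_ofReal
      apply Real.exp_le_exp.mpr
      calc αmn * x ≤ A k * x := mul_le_mul_of_nonneg_right (hA_ge k hk) hx
        _ ≤ A k * a k ω := mul_le_mul_of_nonneg_left hω.2 (hA_pos k hk).le
    -- the recursive estimate
    have hrec : ∀ k, k < N → D (k + 1) + cx * P (As k) ≤ D k := by
      intro k hk
      set Ss : Set (Fin k → ℝ) := {v | ∀ j : ℕ, ∀ _ : j < k + 1,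
        phiE κ lam θ v₀ t j (fun i : Fin j => v ⟨i.val, by omega⟩) < x} with hSs_def
      have hSmeas : MeasurableSet Ss := by
        have he : Ss = ⋂ (j : ℕ) (_ : j < k + 1),
            {v : Fin k → ℝ | phiE κ lam θ v₀ t j
              (fun i : Fin j => v ⟨i.val, by omega⟩) < x} := by
          ext v; simp [hSs_def]
        rw [he]
        refine MeasurableSet.iInter fun j => MeasurableSet.iInter fun hj => ?_
        exact measurableSet_lt ((measurable_phiE κ lam θ v₀ t j).comp
          (measurable_pi_lambda _ fun i => measurable_pi_apply _)) measurable_const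
      set g : (Fin k → ℝ) → ℝ≥0∞ := Ss.indicator (fun _ => 1) with hg_def
      have hgmeas : Measurable g := measurable_const.indicator hSmeas
      have hiff : ∀ ω, ω ∈ Bs (k + 1) ↔ Hmap k ω ∈ Ss := by
        intro ω
        simp only [hBs_def, hSs_def, Set.mem_setOf_eq]
        constructor
        · intro hb j hj
          have h1 := hb j hj
          rwa [ha_eq j (by omega) ω] at h1
        · intro hs j hj
          have h1 := hs j hj
          rwa [ha_eq j (by omega) ω]
      have hgH : ∀ (f : Ω → ℝ≥0∞) ω,
          g (Hmap k ω) * f ω = (Bs (k + 1)).indicator f ω := by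
        intro f ω
        by_cases hω : ω ∈ Bs (k + 1)
        · rw [Set.indicator_of_mem hω, hg_def,
            Set.indicator_of_mem ((hiff ω).mp hω), one_mul]
        · rw [Set.indicator_of_notMem hω, hg_def,
            Set.indicator_of_notMem (fun hc => hω ((hiff ω).mpr hc)), zero_mul]
      -- convert J (k+1) and apply the step estimate
      have hJ1 : J (k + 1) = ∫⁻ ω, g (Hmap k ω)
          * ENNReal.ofReal (Real.exp (A (k + 1) * a (k + 1) ω)) ∂P := by
        rw [hJ_def]
        simp only
        rw [← lintegral_indicator (hBmeas (k + 1))]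
        exact (lintegral_congr fun ω =>
          hgH (fun ω => ENNReal.ofReal (Real.exp (A (k + 1) * a (k + 1) ω))) ω).symm
      have hJ2 : ∫⁻ ω, g (Hmap k ω) * ENNReal.ofReal (Real.exp (A k * a k ω)) ∂P
          = ∫⁻ ω in Bs (k + 1), ENNReal.ofReal (Real.exp (A k * a k ω)) ∂P := by
        rw [← lintegral_indicator (hBmeas (k + 1))]
        exact lintegral_congr fun ω =>
          hgH (fun ω => ENNReal.ofReal (Real.exp (A k * a k ω))) ω
      have hstep := step k hk g hgmeas
      have hsplitJ : ∫⁻ ω in Bs (k + 1), ENNReal.ofReal (Real.exp (A k * a k ω)) ∂P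
          + ∫⁻ ω in As k, ENNReal.ofReal (Real.exp (A k * a k ω)) ∂P = J k := by
        rw [hJ_def]
        simp only
        rw [← lintegral_union (hAmeas k) (hdisj k), hunion k]
      -- assemble
      have hw : ENNReal.ofReal (Real.exp (-(γ * t (k + 1))))
          * ENNReal.ofReal (Real.exp (γ * (t (k + 1) - t k)))
          = ENNReal.ofReal (Real.exp (-(γ * t k))) := by
        rw [← ENNReal.ofReal_mul (Real.exp_pos _).le, ← Real.exp_add]
        congr 2
        ring
      have hcx_le : cx ≤ ENNReal.ofReal (Real.exp (-(γ * t k)))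
          * ENNReal.ofReal (Real.exp (αmn * x)) := by
        rw [hcx_def, ← ENNReal.ofReal_mul (Real.exp_pos _).le, ← Real.exp_add]
        apply ENNReal.ofReal_le_ofReal
        apply Real.exp_le_exp.mpr
        have h1 := htT k hk.le
        nlinarith [mul_le_mul_of_nonneg_left h1 hγ0]
      calc D (k + 1) + cx * P (As k)
          = ENNReal.ofReal (Real.exp (-(γ * t (k + 1))))
            * (∫⁻ ω, g (Hmap k ω)
              * ENNReal.ofReal (Real.exp (A (k + 1) * a (k + 1) ω)) ∂P)
            + cx * P (As k) := by
            rw [hD_def]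
            simp only
            rw [hJ1]
        _ ≤ ENNReal.ofReal (Real.exp (-(γ * t (k + 1))))
            * (ENNReal.ofReal (Real.exp (γ * (t (k + 1) - t k)))
              * ∫⁻ ω, g (Hmap k ω) * ENNReal.ofReal (Real.exp (A k * a k ω)) ∂P)
            + cx * P (As k) := by
            exact add_le_add_left (mul_le_mul_right hstep _) _
        _ = ENNReal.ofReal (Real.exp (-(γ * t k)))
            * (∫⁻ ω in Bs (k + 1), ENNReal.ofReal (Real.exp (A k * a k ω)) ∂P)
            + cx * P (As k) := by
            rw [hJ2, ← mul_assoc, hw]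
        _ ≤ ENNReal.ofReal (Real.exp (-(γ * t k)))
            * (∫⁻ ω in Bs (k + 1), ENNReal.ofReal (Real.exp (A k * a k ω)) ∂P)
            + ENNReal.ofReal (Real.exp (-(γ * t k)))
              * (∫⁻ ω in As k, ENNReal.ofReal (Real.exp (A k * a k ω)) ∂P) := by
            apply add_le_add_right
            calc cx * P (As k)
                ≤ (ENNReal.ofReal (Real.exp (-(γ * t k)))
                  * ENNReal.ofReal (Real.exp (αmn * x))) * P (As k) :=
                  mul_le_mul_left hcx_le _
              _ = ENNReal.ofReal (Real.exp (-(γ * t k)))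
                  * (ENNReal.ofReal (Real.exp (αmn * x)) * P (As k)) := by
                  rw [mul_assoc]
              _ ≤ _ := mul_le_mul_right (hAsJ k hk.le) _
        _ = D k := by
            rw [← mul_add, hsplitJ, hD_def]
    -- sum the recursion
    have hsum2 : ∀ n, n ≤ N →
        D n + cx * ∑ k ∈ Finset.range n, P (As k) ≤ D 0 := by
      intro n
      induction n with
      | zero => intro _; simp
      | succ n ih =>
          intro hn
          have h1 := hrec n (by omega)
          have h2 := ih (by omega)
          calc D (n + 1) + cx * ∑ k ∈ Finset.range (n + 1), P (As k)
              = (D (n + 1) + cx * P (As n))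
                + cx * ∑ k ∈ Finset.range n, P (As k) := by
                rw [Finset.sum_range_succ, mul_add]
                ring_nf
              _ ≤ D n + cx * ∑ k ∈ Finset.range n, P (As k) :=
                add_le_add_left h1 _
              _ ≤ D 0 := h2
    -- last piece
    have hlast : cx * P (As N) ≤ D N := by
      rw [hD_def]
      simp only
      rw [hpart.last]
      have h1 : cx = ENNReal.ofReal (Real.exp (-(γ * T)))
          * ENNReal.ofReal (Real.exp (αmn * x)) := by
        rw [hcx_def, ← ENNReal.ofReal_mul (Real.exp_pos _).le, ← Real.exp_add]
        congr 1
        ring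
      have h2 : ∫⁻ ω in As N, ENNReal.ofReal (Real.exp (A N * a N ω)) ∂P
          ≤ J N := by
        rw [hJ_def]
        simp only
        apply lintegral_mono_set
        rw [hAs_def]
        exact Set.inter_subset_left
      calc cx * P (As N)
          = ENNReal.ofReal (Real.exp (-(γ * T)))
            * (ENNReal.ofReal (Real.exp (αmn * x)) * P (As N)) := by
            rw [h1, mul_assoc]
        _ ≤ ENNReal.ofReal (Real.exp (-(γ * T)))
            * ∫⁻ ω in As N, ENNReal.ofReal (Real.exp (A N * a N ω)) ∂P :=
            mul_le_mul_right (hAsJ N le_rfl) _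
        _ ≤ ENNReal.ofReal (Real.exp (-(γ * T))) * J N := mul_le_mul_right h2 _
    -- bound on D 0
    have hD0 : D 0 ≤ ENNReal.ofReal (Real.exp (αmx * v₀)) := by
      rw [hD_def]
      simp only
      rw [hpart.zero]
      have hJ0 : J 0 ≤ ENNReal.ofReal (Real.exp (αmx * v₀)) := by
        rw [hJ_def]
        simp only
        have hB0 : Bs 0 = Set.univ := by
          ext ω; simp [hBs_def]
        rw [hB0, Measure.restrict_univ]
        have hpt : ∀ ω, ENNReal.ofReal (Real.exp (A 0 * a 0 ω))
            ≤ ENNReal.ofReal (Real.exp (αmx * v₀)) := by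
          intro ω
          apply ENNReal.ofReal_le_ofReal
          apply Real.exp_le_exp.mpr
          have ha0 : a 0 ω = v₀ := rfl
          rw [ha0]
          exact mul_le_mul_of_nonneg_right (hA_le 0 (Nat.zero_le _)) hv₀.le
        calc ∫⁻ ω, ENNReal.ofReal (Real.exp (A 0 * a 0 ω)) ∂P
            ≤ ∫⁻ _, ENNReal.ofReal (Real.exp (αmx * v₀)) ∂P := lintegral_mono hpt
          _ = ENNReal.ofReal (Real.exp (αmx * v₀)) := by
              rw [lintegral_const, measure_univ, mul_one]
      calc ENNReal.ofReal (Real.exp (-(γ * 0))) * J 0 = J 0 := by norm_num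
        _ ≤ _ := hJ0
    have htot : cx * ∑ k ∈ Finset.range (N + 1), P (As k)
        ≤ ENNReal.ofReal (Real.exp (αmx * v₀)) := by
      calc cx * ∑ k ∈ Finset.range (N + 1), P (As k)
          = cx * P (As N) + cx * ∑ k ∈ Finset.range N, P (As k) := by
            rw [Finset.sum_range_succ, mul_add, add_comm]
        _ ≤ D N + cx * ∑ k ∈ Finset.range N, P (As k) := add_le_add_left hlast _
        _ ≤ D 0 := hsum2 N le_rfl
        _ ≤ _ := hD0
    -- covering by the disjoint first-hitting events
    have hcover : {ω | ∃ k, k ≤ N ∧ x ≤ a k ω} ⊆ ⋃ k ∈ Finset.range (N + 1), As k := by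
      rintro ω ⟨k, hk, hak⟩
      have hQ : ∃ j, x ≤ a j ω := ⟨k, hak⟩
      have hj₀ : x ≤ a (Nat.find hQ) ω := Nat.find_spec hQ
      have hj₀le : Nat.find hQ ≤ k := Nat.find_min' hQ hak
      have hmem : Nat.find hQ ∈ Finset.range (N + 1) :=
        Finset.mem_range.mpr (Nat.lt_succ_of_le (hj₀le.trans hk))
      apply Set.mem_biUnion hmem
      refine ⟨?_, hj₀⟩
      intro j hj
      exact lt_of_not_ge (Nat.find_min hQ hj)
    have hPE : P {ω | ∃ k, k ≤ N ∧ x ≤ a k ω}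
        ≤ ∑ k ∈ Finset.range (N + 1), P (As k) :=
      (measure_mono hcover).trans (measure_biUnion_finset_le _ _)
    -- cancel the factor cx
    have hcx0 : cx ≠ 0 := (ENNReal.ofReal_pos.mpr (Real.exp_pos _)).ne'
    have hcxt : cx ≠ ⊤ := ENNReal.ofReal_ne_top
    refine (ENNReal.mul_le_mul_iff_right hcx0 hcxt).mp ?_
    calc cx * P {ω | ∃ k, k ≤ N ∧ x ≤ a k ω}
        ≤ cx * ∑ k ∈ Finset.range (N + 1), P (As k) := mul_le_mul_right hPE _
      _ ≤ ENNReal.ofReal (Real.exp (αmx * v₀)) := htot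
      _ = cx * ENNReal.ofReal (Kc * Real.exp (-αmn * x)) := by
          rw [hcx_def, hKc_def, ← Real.exp_add,
            ← ENNReal.ofReal_mul (Real.exp_pos _).le, ← Real.exp_add]
          congr 1
          ring
  -- final assembly via integer levels
  set E : ℕ → Set Ω := fun n => {ω | ∃ k, k ≤ N ∧ (n : ℝ) ≤ a k ω} with hE_def
  have hEmeas : ∀ n, MeasurableSet (E n) := by
    intro n
    have he : E n = ⋃ k, ⋃ (_ : k ≤ N), {ω | (n : ℝ) ≤ a k ω} := by
      ext ω; simp [hE_def]
    rw [he]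
    exact MeasurableSet.iUnion fun k => MeasurableSet.iUnion fun _ =>
      measurableSet_le measurable_const (ha_meas k)
  set fterm : ℕ → Ω → ℝ≥0∞ := fun n ω =>
    ENNReal.ofReal (((n : ℝ) + 1) ^ p) * (E n).indicator (fun _ => 1) ω with hft_def
  have hterm_meas : ∀ n, Measurable (fterm n) := fun n =>
    (measurable_const.indicator (hEmeas n)).const_mul _
  have hpoint2 : ∀ ω, ENNReal.ofReal (⨆ k ∈ Finset.range (N + 1), (a k ω) ^ p)
      ≤ ∑' n, fterm n ω := by
    intro ω
    by_cases htop : (∑' n, fterm n ω) = ⊤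
    · rw [htop]; exact le_top
    · have hkb : ∀ k, k ≤ N → ENNReal.ofReal ((a k ω) ^ p) ≤ ∑' n, fterm n ω := by
        intro k hk
        set n := ⌊a k ω⌋₊ with hn_def
        have h1 : (n : ℝ) ≤ a k ω := Nat.floor_le (ha_nonneg k ω)
        have h2 : a k ω ≤ (n : ℝ) + 1 := (Nat.lt_floor_add_one _).le
        have hmem : ω ∈ E n := ⟨k, hk, h1⟩
        have h3 : fterm n ω = ENNReal.ofReal (((n : ℝ) + 1) ^ p) := by
          rw [hft_def]
          simp only
          rw [Set.indicator_of_mem hmem, mul_one]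
        calc ENNReal.ofReal ((a k ω) ^ p)
            ≤ ENNReal.ofReal (((n : ℝ) + 1) ^ p) := by
              apply ENNReal.ofReal_le_ofReal
              exact Real.rpow_le_rpow (ha_nonneg k ω) h2 (by linarith)
          _ = fterm n ω := h3.symm
          _ ≤ ∑' m, fterm m ω := ENNReal.le_tsum n
      have hkb' : ∀ k, k ≤ N → (a k ω) ^ p ≤ (∑' n, fterm n ω).toReal := fun k hk =>
        (ENNReal.ofReal_le_iff_le_toReal htop).mp (hkb k hk)
      have hsup : (⨆ k ∈ Finset.range (N + 1), (a k ω) ^ p)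
          ≤ (∑' n, fterm n ω).toReal := by
        apply Real.iSup_le _ ENNReal.toReal_nonneg
        intro k
        apply Real.iSup_le _ ENNReal.toReal_nonneg
        intro hk
        exact hkb' k (by
          have := Finset.mem_range.mp hk
          omega)
      calc ENNReal.ofReal (⨆ k ∈ Finset.range (N + 1), (a k ω) ^ p)
          ≤ ENNReal.ofReal ((∑' n, fterm n ω).toReal) := ENNReal.ofReal_le_ofReal hsup
        _ = ∑' n, fterm n ω := ENNReal.ofReal_toReal htop
  calc ∫⁻ ω, ENNReal.ofReal (⨆ k ∈ Finset.range (N + 1), (a k ω) ^ p) ∂P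
      ≤ ∫⁻ ω, ∑' n, fterm n ω ∂P := lintegral_mono hpoint2
    _ = ∑' n, ∫⁻ ω, fterm n ω ∂P :=
        lintegral_tsum fun n => (hterm_meas n).aemeasurable
    _ ≤ ∑' n, ENNReal.ofReal (cn n) := by
        apply ENNReal.tsum_le_tsum
        intro n
        rw [hft_def]
        simp only
        rw [lintegral_const_mul _ (measurable_const.indicator (hEmeas n)),
          lintegral_indicator (hEmeas n), setLIntegral_one]
        have htail := tail ((n : ℝ)) (Nat.cast_nonneg n)
        calc ENNReal.ofReal (((n : ℝ) + 1) ^ p) * P (E n)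
            ≤ ENNReal.ofReal (((n : ℝ) + 1) ^ p)
              * ENNReal.ofReal (Kc * Real.exp (-αmn * n)) :=
              mul_le_mul_right htail _
          _ = ENNReal.ofReal (cn n) := by
              rw [← ENNReal.ofReal_mul (Real.rpow_nonneg (by positivity) _)]
              rw [hcn_def]
              congr 1
              ring
    _ = ENNReal.ofReal (∑' n, cn n) := (ENNReal.ofReal_tsum_of_nonneg hcn0 hsum).symm


end
end

section
/- Assume 4κλ ≥ θ². Then, almost surely, for every n = 0, …, N−1 the value v_{n+1} given by the closed-form recursion is the unique real number y satisfying the implicit equation y = v_n + κ(λ − y)(t_{n+1} − t_n) + θ√(v_n)Δ_nW + (θ²/4)((Δ_nW)² − (t_{n+1} − t_n)), and moreover v_n ≥ 0 for all n = 0, 1, …, N. -/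
open MeasureTheory ProbabilityTheory
open scoped ENNReal NNReal

noncomputable section

variable {Ω : Type*} [MeasurableSpace Ω]

/-- if `4κλ ≥ θ²` then, almost surely, the closed-form value `v_{n+1}` of the
drift-implicit Milstein scheme is the unique solution `y` of the implicit equation
`y = v_n + κ(λ - y)(t_{n+1} - t_n) + θ√(v_n)Δ_nW + (θ²/4)((Δ_nW)² - (t_{n+1} - t_n))`,
and all `v_n`, `n = 0, …, N`, are nonnegative. -/
theorem statement12
    {Ω : Type*} [MeasurableSpace Ω] (P : Measure Ω) [IsProbabilityMeasure P]
    (W : ℝ → Ω → ℝ) (hW : IsBrownian P W)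
    (κ lam θ v₀ T : ℝ)
    (hκ : 0 < κ) (hlam : 0 < lam) (hθ : 0 < θ) (hv₀ : 0 < v₀) (hT : 0 < T)
    (hF : θ ^ 2 ≤ 4 * κ * lam) :
    ∀ (N : ℕ) (t : ℕ → ℝ), IsPartition t N T →
      ∀ᵐ ω ∂P,
        (∀ n < N,
          (milstein κ lam θ v₀ t W (n + 1) ω
              = milstein κ lam θ v₀ t W n ω
                + κ * (lam - milstein κ lam θ v₀ t W (n + 1) ω) * (t (n + 1) - t n)
                + θ * Real.sqrt (milstein κ lam θ v₀ t W n ω) * (W (t (n + 1)) ω - W (t n) ω)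
                + (θ ^ 2 / 4) * ((W (t (n + 1)) ω - W (t n) ω) ^ 2 - (t (n + 1) - t n)))
          ∧ ∀ y : ℝ,
              y = milstein κ lam θ v₀ t W n ω + κ * (lam - y) * (t (n + 1) - t n)
                + θ * Real.sqrt (milstein κ lam θ v₀ t W n ω) * (W (t (n + 1)) ω - W (t n) ω)
                + (θ ^ 2 / 4) * ((W (t (n + 1)) ω - W (t n) ω) ^ 2 - (t (n + 1) - t n))
              → y = milstein κ lam θ v₀ t W (n + 1) ω)
        ∧ ∀ n ≤ N, 0 ≤ milstein κ lam θ v₀ t W n ω := by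
  intro N t ht
  refine Filter.Eventually.of_forall fun ω => ?_
  have hpos : ∀ n < N, 0 < 1 + κ * (t (n + 1) - t n) := by
    intro n hn
    have := ht.lt n hn
    nlinarith
  have hnn : ∀ n ≤ N, 0 ≤ milstein κ lam θ v₀ t W n ω := by
    intro n hn
    induction n with
    | zero => simpa [milstein] using hv₀.le
    | succ m ih =>
      have hm : m < N := hn
      have h1 := hpos m hm
      have hd : 0 < t (m + 1) - t m := sub_pos.mpr (ht.lt m hm)
      show 0 ≤ (1 / (1 + κ * (t (m + 1) - t m))) *
        ((Real.sqrt (milstein κ lam θ v₀ t W m ω)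
            + (θ / 2) * (W (t (m + 1)) ω - W (t m) ω)) ^ 2
          + (κ * lam - θ ^ 2 / 4) * (t (m + 1) - t m))
      apply mul_nonneg (by positivity)
      have h2 : 0 ≤ κ * lam - θ ^ 2 / 4 := by nlinarith
      nlinarith [sq_nonneg (Real.sqrt (milstein κ lam θ v₀ t W m ω)
        + (θ / 2) * (W (t (m + 1)) ω - W (t m) ω))]
  refine ⟨fun n hn => ?_, hnn⟩
  have h1 := hpos n hn
  have hvn := hnn n hn.le
  set v := milstein κ lam θ v₀ t W n ω with hv
  set v' := milstein κ lam θ v₀ t W (n + 1) ω with hv'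
  set Δ := t (n + 1) - t n with hΔ
  set ΔW := W (t (n + 1)) ω - W (t n) ω with hΔW
  have hsq : Real.sqrt v ^ 2 = v := Real.sq_sqrt hvn
  have hrec : v' * (1 + κ * Δ) =
      (Real.sqrt v + (θ / 2) * ΔW) ^ 2 + (κ * lam - θ ^ 2 / 4) * Δ := by
    rw [hv']
    show (1 / (1 + κ * Δ)) * _ * (1 + κ * Δ) = _
    field_simp
    rw [← hv, ← hΔ, ← hΔW]
    ring
  have key : v' * (1 + κ * Δ) =
      v + κ * lam * Δ + θ * Real.sqrt v * ΔW + (θ ^ 2 / 4) * (ΔW ^ 2 - Δ) := by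
    linear_combination hrec + hsq
  constructor
  · linear_combination key
  · intro y hy
    have : y * (1 + κ * Δ) = v' * (1 + κ * Δ) := by linear_combination hy - key
    exact mul_right_cancel₀ h1.ne' this

end
end
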